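/- arXiv:1401.7658 — 5 statements merged into one kernel-verified Lean document; each statement's English description precedes it below -/
import Mathlib

section
/- For any self-adjoint operators $X_1, \ldots, X_r$ on a finite-dimensional Hilbert space, $\big|\sum_{i=1}^r X_i\big| \le \sqrt{r}\,\big(\sum_{i=1}^r X_i^2\big)^{1/2}$ in the positive semidefinite order. -/
open Matrix
open scoped ComplexOrder

noncomputable def matAbs {m : ℕ} (A : Matrix (Fin m) (Fin m) ℂ) : Matrix (Fin m) (Fin m) ℂ :=
  (Matrix.posSemidef_conjTranspose_mul_self A).1.eigenvectorUnitary.1 *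
    diagonal ((↑) ∘ (√·) ∘ (Matrix.posSemidef_conjTranspose_mul_self A).1.eigenvalues) *
    (star (Matrix.posSemidef_conjTranspose_mul_self A).1.eigenvectorUnitary : Matrix (Fin m) (Fin m) ℂ)

noncomputable def traceNorm {m : ℕ} (A : Matrix (Fin m) (Fin m) ℂ) : ℝ :=
  ((matAbs A).trace).re

open Classical in
noncomputable def psdSqrt {m : ℕ} (A : Matrix (Fin m) (Fin m) ℂ) : Matrix (Fin m) (Fin m) ℂ :=
  if h : A.PosSemidef then h.1.eigenvectorUnitary.1 * diagonal ((↑) ∘ (√·) ∘ h.1.eigenvalues) *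
    (star h.1.eigenvectorUnitary : Matrix (Fin m) (Fin m) ℂ) else 0

noncomputable def fid {m : ℕ} (A B : Matrix (Fin m) (Fin m) ℂ) : ℝ :=
  traceNorm (psdSqrt A * psdSqrt B)

noncomputable def matPosPart {m : ℕ} (A : Matrix (Fin m) (Fin m) ℂ) : Matrix (Fin m) (Fin m) ℂ :=
  (2⁻¹ : ℂ) • (matAbs A + A)

noncomputable def matNegPart {m : ℕ} (A : Matrix (Fin m) (Fin m) ℂ) : Matrix (Fin m) (Fin m) ℂ :=
  (2⁻¹ : ℂ) • (matAbs A - A)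

section Aux

variable {n : Type*} [Fintype n] [DecidableEq n]

omit [DecidableEq n] in
lemma smulPSD {c : ℝ} (hc : 0 ≤ c) {M : Matrix n n ℂ} (hM : M.PosSemidef) :
    ((c : ℂ) • M).PosSemidef := by
  refine PosSemidef.of_dotProduct_mulVec_nonneg ?_ fun x => ?_
  · unfold Matrix.IsHermitian
    rw [conjTranspose_smul, hM.1]
    congr 1
    simp
  · rw [smul_mulVec, dotProduct_smul, smul_eq_mul]
    exact mul_nonneg (by exact_mod_cast hc) (hM.dotProduct_mulVec_nonneg x)

lemma psd_of_eig {A : Matrix n n ℂ} (hA : A.IsHermitian)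
    (h : ∀ i, 0 ≤ hA.eigenvalues i) : A.PosSemidef := by
  rw [hA.spectral_theorem]
  have hd : (diagonal (RCLike.ofReal ∘ hA.eigenvalues) : Matrix n n ℂ).PosSemidef :=
    posSemidef_diagonal_iff.mpr fun i => by
      simpa using (by exact_mod_cast h i : (0:ℂ) ≤ (hA.eigenvalues i : ℂ))
  simpa [Matrix.star_eq_conjTranspose] using hd.mul_mul_conjTranspose_same (hA.eigenvectorUnitary : Matrix n n ℂ)

lemma sqrt_mono_aux {P Q : Matrix n n ℂ} (hP : P.PosSemidef) (hQ : Q.PosSemidef)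
    (h : (P ^ 2 - Q ^ 2).PosSemidef) : (P - Q).PosSemidef := by
  have hH : (P - Q).IsHermitian := hP.1.sub hQ.1
  refine psd_of_eig hH fun i => ?_
  by_contra hlt
  push_neg at hlt
  set t := hH.eigenvalues i with ht
  set v : n → ℂ := ⇑(hH.eigenvectorBasis i) with hv
  have hv' : (P - Q) *ᵥ v = (t : ℂ) • v := by
    rw [show (P - Q) *ᵥ v = t • v from hH.mulVec_eigenvectorBasis i]
    ext j
    simp [Complex.real_smul]
  have hvne : v ≠ 0 := by
    intro h0
    have := hH.eigenvectorBasis.orthonormal.ne_zero i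
    apply this
    ext j
    exact congrFun h0 j
  have h_sum : star v ⬝ᵥ (P ^ 2 - Q ^ 2) *ᵥ v
      = (t : ℂ) * (star v ⬝ᵥ P *ᵥ v + star v ⬝ᵥ Q *ᵥ v) := by
    calc star v ⬝ᵥ (P ^ 2 - Q ^ 2) *ᵥ v
        = star v ⬝ᵥ P *ᵥ (P - Q) *ᵥ v + star v ⬝ᵥ (P - Q) *ᵥ Q *ᵥ v := by
          rw [mulVec_mulVec, mulVec_mulVec, ← dotProduct_add, ← add_mulVec, mul_sub, sub_mul,
            add_sub, sub_add_cancel, pow_two, pow_two]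
      _ = (t:ℂ) * (star v ⬝ᵥ P *ᵥ v) + (star v) ᵥ* (P - Q)ᴴ ⬝ᵥ Q *ᵥ v := by
          rw [hv', mulVec_smul, dotProduct_smul, smul_eq_mul,
            dotProduct_mulVec _ (P - Q), hH]
      _ = (t:ℂ) * (star v ⬝ᵥ P *ᵥ v + star v ⬝ᵥ Q *ᵥ v) := by
          rw [← star_mulVec, hv', mul_add]
          congr 1
          rw [star_smul, smul_dotProduct]
          simp [smul_eq_mul, Complex.star_def, Complex.conj_ofReal]
  have ha : 0 ≤ star v ⬝ᵥ P *ᵥ v := hP.dotProduct_mulVec_nonneg v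
  have hb : 0 ≤ star v ⬝ᵥ Q *ᵥ v := hQ.dotProduct_mulVec_nonneg v
  have hpos : 0 ≤ (t : ℂ) * (star v ⬝ᵥ P *ᵥ v + star v ⬝ᵥ Q *ᵥ v) := h_sum ▸ h.dotProduct_mulVec_nonneg v
  have hab : star v ⬝ᵥ P *ᵥ v + star v ⬝ᵥ Q *ᵥ v = 0 := by
    have hs : 0 ≤ star v ⬝ᵥ P *ᵥ v + star v ⬝ᵥ Q *ᵥ v := add_nonneg ha hb
    have htneg : (t : ℂ) ≤ 0 := by exact_mod_cast hlt.le
    have hle : (t : ℂ) * (star v ⬝ᵥ P *ᵥ v + star v ⬝ᵥ Q *ᵥ v) ≤ 0 :=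
      mul_nonpos_of_nonpos_of_nonneg htneg hs
    have h0 : (t : ℂ) * (star v ⬝ᵥ P *ᵥ v + star v ⬝ᵥ Q *ᵥ v) = 0 := le_antisymm hle hpos
    rcases mul_eq_zero.mp h0 with h' | h'
    · exact absurd h' (by exact_mod_cast hlt.ne)
    · exact h'
  obtain ⟨hPa, hQa⟩ := (add_eq_zero_iff_of_nonneg ha hb).mp hab
  have hPv : P *ᵥ v = 0 := (hP.dotProduct_mulVec_zero_iff v).mp hPa
  have hQv : Q *ᵥ v = 0 := (hQ.dotProduct_mulVec_zero_iff v).mp hQa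
  have hz : (t : ℂ) • v = 0 := by rw [← hv', sub_mulVec, hPv, hQv, sub_zero]
  rcases smul_eq_zero.mp hz with h' | h'
  · exact absurd h' (by exact_mod_cast hlt.ne)
  · exact hvne h'

lemma cs_part {r : ℕ} (X : Fin r → Matrix n n ℂ) (hX : ∀ i, (X i).IsHermitian) :
    ((r : ℂ) • (∑ i, X i * X i) - (∑ i, X i) * (∑ i, X i)).PosSemidef := by
  set S := ∑ i, X i with hSdef
  set A := ∑ i, X i * X i with hAdef
  have expand : ∀ i j : Fin r,
      (X i - X j) * (X i - X j) = X i * X i - X i * X j - X j * X i + X j * X j := by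
    intro i j; noncomm_ring
  have key : ∑ i, ∑ j, (X i - X j) * (X i - X j)
      = ((r : ℕ) • A - S * S) + ((r : ℕ) • A - S * S) := by
    simp_rw [expand, Finset.sum_add_distrib, Finset.sum_sub_distrib, Finset.sum_const,
      Finset.card_univ, Fintype.card_fin, ← Finset.sum_mul, ← Finset.mul_sum, ← hSdef,
      ← Finset.smul_sum, ← hAdef]
    rw [show (∑ x : Fin r, X x * S) = S * S from by rw [← Finset.sum_mul, ← hSdef]]
    abel
  have hpsd : (∑ i, ∑ j, (X i - X j) * (X i - X j)).PosSemidef := by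
    refine Finset.sum_induction _ _ (fun a b ha hb => ha.add hb) .zero fun i _ => ?_
    refine Finset.sum_induction _ _ (fun a b ha hb => ha.add hb) .zero fun j _ => ?_
    have h := posSemidef_conjTranspose_mul_self (X i - X j)
    rwa [(hX i).sub (hX j)] at h
  have heq : (r : ℂ) • A - S * S
      = ((2⁻¹ : ℝ) : ℂ) • ∑ i, ∑ j, (X i - X j) * (X i - X j) := by
    rw [key, show ((r : ℂ) • A : Matrix n n ℂ) = (r : ℕ) • A from Nat.cast_smul_eq_nsmul ℂ r A,
      smul_add, ← add_smul]
    have h2 : ((2⁻¹ : ℝ) : ℂ) + ((2⁻¹ : ℝ) : ℂ) = 1 := by norm_num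
    rw [h2, one_smul]
  rw [heq]
  exact smulPSD (by norm_num) hpsd

end Aux

lemma psdSqrt_eq' {m : ℕ} {A : Matrix (Fin m) (Fin m) ℂ} (hA : A.PosSemidef) :
    psdSqrt A = hA.1.eigenvectorUnitary.1 * diagonal ((↑) ∘ (√·) ∘ hA.1.eigenvalues) *
      (star hA.1.eigenvectorUnitary : Matrix (Fin m) (Fin m) ℂ) := by
  unfold psdSqrt
  rw [dif_pos hA]

lemma psdSqrt_psd' {m : ℕ} {A : Matrix (Fin m) (Fin m) ℂ} (hA : A.PosSemidef) :
    (psdSqrt A).PosSemidef := by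
  rw [psdSqrt_eq' hA]
  have hd : (diagonal ((↑) ∘ (√·) ∘ hA.1.eigenvalues) : Matrix (Fin m) (Fin m) ℂ).PosSemidef :=
    posSemidef_diagonal_iff.mpr fun i => by
      simpa using (by exact_mod_cast Real.sqrt_nonneg _ :
        (0:ℂ) ≤ ((√(hA.1.eigenvalues i) : ℝ) : ℂ))
  simpa [Matrix.star_eq_conjTranspose] using
    hd.mul_mul_conjTranspose_same (hA.1.eigenvectorUnitary : Matrix (Fin m) (Fin m) ℂ)

lemma psdSqrt_sq' {m : ℕ} {A : Matrix (Fin m) (Fin m) ℂ} (hA : A.PosSemidef) :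
    psdSqrt A ^ 2 = A := by
  rw [psdSqrt_eq' hA]
  conv_rhs => rw [hA.1.spectral_theorem, Unitary.conjStarAlgAut_apply]
  have hU : (star hA.1.eigenvectorUnitary : Matrix (Fin m) (Fin m) ℂ) *
      hA.1.eigenvectorUnitary.1 = 1 := Unitary.coe_star_mul_self _
  have hD : (diagonal ((↑) ∘ (√·) ∘ hA.1.eigenvalues) : Matrix (Fin m) (Fin m) ℂ) *
      diagonal ((↑) ∘ (√·) ∘ hA.1.eigenvalues) = diagonal (RCLike.ofReal ∘ hA.1.eigenvalues) := by
    rw [diagonal_mul_diagonal]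
    congr 1
    funext i
    simp only [Function.comp_apply]
    rw [← Complex.ofReal_mul, Real.mul_self_sqrt (hA.eigenvalues_nonneg i)]
    rfl
  rw [pow_two]
  calc _ = hA.1.eigenvectorUnitary.1 * (diagonal ((↑) ∘ (√·) ∘ hA.1.eigenvalues) *
        ((star hA.1.eigenvectorUnitary : Matrix (Fin m) (Fin m) ℂ) * hA.1.eigenvectorUnitary.1) *
        diagonal ((↑) ∘ (√·) ∘ hA.1.eigenvalues)) *
        (star hA.1.eigenvectorUnitary : Matrix (Fin m) (Fin m) ℂ) := by
          simp only [Matrix.mul_assoc]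
    _ = _ := by rw [hU, Matrix.mul_one, hD]

lemma matAbs_eq' {m : ℕ} (A : Matrix (Fin m) (Fin m) ℂ) :
    matAbs A = psdSqrt (Aᴴ * A) := by
  rw [psdSqrt_eq' (posSemidef_conjTranspose_mul_self A)]
  rfl

theorem abs_sum_le_sqrt_card_smul_sqrt_sum_sq {d r : ℕ}
    (X : Fin r → Matrix (Fin d) (Fin d) ℂ) (hX : ∀ i, (X i).IsHermitian) :
    (((Real.sqrt r : ℝ) : ℂ) • psdSqrt (∑ i, X i * X i) - matAbs (∑ i, X i)).PosSemidef := by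
  set S := ∑ i, X i with hSdef
  have hS : S.IsHermitian := by
    unfold Matrix.IsHermitian
    rw [hSdef, conjTranspose_sum]
    exact Finset.sum_congr rfl fun i _ => hX i
  have hA : (∑ i, X i * X i).PosSemidef := by
    refine Finset.sum_induction _ _ (fun a b ha hb => ha.add hb) .zero fun i _ => ?_
    have h := posSemidef_conjTranspose_mul_self (X i)
    rwa [hX i] at h
  have hps : psdSqrt (∑ i, X i * X i) = psdSqrt (∑ i, X i * X i) := by
    rfl
  rw [hps]
  have hQ : (matAbs S).PosSemidef := by
    rw [matAbs_eq']; exact psdSqrt_psd' (posSemidef_conjTranspose_mul_self S)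
  have hP : (((Real.sqrt r : ℝ) : ℂ) • psdSqrt (∑ i, X i * X i)).PosSemidef :=
    smulPSD (Real.sqrt_nonneg r) (psdSqrt_psd' hA)
  refine sqrt_mono_aux hP hQ ?_
  have hP2 : (((Real.sqrt r : ℝ) : ℂ) • psdSqrt (∑ i, X i * X i)) ^ 2 = (r : ℂ) • (∑ i, X i * X i) := by
    rw [smul_pow, psdSqrt_sq' hA]
    congr 1
    rw [← Complex.ofReal_pow, Real.sq_sqrt (Nat.cast_nonneg r)]
    norm_num
  have hQ2 : (matAbs S) ^ 2 = S * S := by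
    have h := psdSqrt_sq' (Matrix.posSemidef_conjTranspose_mul_self S)
    rw [← matAbs_eq'] at h
    rw [h, hS]
  rw [hP2, hQ2]
  exact cs_part X hX
end

section
/- Let $A_1, \ldots, A_r$ be self-adjoint operators on a finite-dimensional Hilbert space. Then the set $\{Y : Y \ge A_k \text{ for all } k\}$ contains a unique element of minimal trace. That is, if $Y_1, Y_2$ both satisfy $Y_i \ge A_k$ for all $k$ and both have trace equal to $\min\{\operatorname{Tr} Y : Y \ge A_k \,\forall k\}$, then $Y_1 = Y_2$. -/
open Matrix
open scoped ComplexOrder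

private lemma herm_form_real {d : ℕ} {M : Matrix (Fin d) (Fin d) ℂ} (hM : M.IsHermitian)
    (v : Fin d → ℂ) : (star v ⬝ᵥ M.mulVec v).im = 0 := by
  have h : star (star v ⬝ᵥ M.mulVec v) = star v ⬝ᵥ M.mulVec v := by
    rw [← star_dotProduct]
    nth_rewrite 2 [← hM]
    rw [star_mulVec, dotProduct_mulVec]
  have := congrArg Complex.im h
  simp only [Complex.star_def, Complex.conj_im] at this
  linarith

private lemma quad_re {d : ℕ} {R : Matrix (Fin d) (Fin d) ℂ} (hR : R.PosSemidef) (t : ℝ)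
    (w v : Fin d → ℂ) :
    t * ((star w ⬝ᵥ R.mulVec v).re + (star v ⬝ᵥ R.mulVec w).re)
      ≤ (star w ⬝ᵥ R.mulVec w).re + t^2 * (star v ⬝ᵥ R.mulVec v).re := by
  have h := hR.dotProduct_mulVec_nonneg (w - (t : ℂ) • v)
  rw [Complex.le_def] at h
  obtain ⟨h, -⟩ := h
  rw [star_sub, star_smul, mulVec_sub, mulVec_smul, sub_dotProduct, dotProduct_sub,
    dotProduct_sub, smul_dotProduct, dotProduct_smul, dotProduct_smul, smul_dotProduct] at h
  simp only [Complex.star_def, Complex.conj_ofReal, Complex.zero_re, Complex.sub_re,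
    Complex.smul_re, Complex.ofReal_re, smul_eq_mul, Complex.re_ofReal_mul] at h
  nlinarith [sq_nonneg t]

private lemma form_bound {d : ℕ} (M : Matrix (Fin d) (Fin d) ℂ) (w : Fin d → ℂ) :
    (star w ⬝ᵥ M.mulVec w).re ≤ (∑ i, ∑ j, ‖M i j‖) * (star w ⬝ᵥ w).re := by
  have hsum : (star w ⬝ᵥ w).re = ∑ i, ‖w i‖ ^ 2 := by
    simp [dotProduct, Complex.re_sum, Complex.mul_re, Complex.sq_norm,
      Complex.normSq_apply]
  have hbd : ∀ i : Fin d, ‖w i‖ ^ 2 ≤ (star w ⬝ᵥ w).re := by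
    intro i
    rw [hsum]
    exact Finset.single_le_sum (f := fun i => ‖w i‖ ^ 2) (fun j _ => sq_nonneg _) (Finset.mem_univ i)
  have key : ‖star w ⬝ᵥ M.mulVec w‖ ≤ (∑ i, ∑ j, ‖M i j‖) * (star w ⬝ᵥ w).re := by
    rw [dotProduct]
    refine (norm_sum_le _ _).trans ?_
    rw [Finset.sum_mul]
    refine Finset.sum_le_sum fun i _ => ?_
    rw [mulVec, dotProduct, Finset.mul_sum, Finset.sum_mul]
    refine (norm_sum_le _ _).trans ?_
    refine Finset.sum_le_sum fun j _ => ?_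
    rw [norm_mul, norm_mul]
    have h1 : ‖(star w) i‖ = ‖w i‖ := by simp
    rw [h1, ← mul_assoc, mul_comm ‖w i‖ ‖M i j‖, mul_assoc]
    refine mul_le_mul_of_nonneg_left ?_ (norm_nonneg _)
    calc ‖w i‖ * ‖w j‖ ≤ (‖w i‖^2 + ‖w j‖^2)/2 := by nlinarith [sq_nonneg (‖w i‖ - ‖w j‖)]
      _ ≤ (star w ⬝ᵥ w).re := by
          have := hbd i; have := hbd j; linarith
  exact (Complex.re_le_norm _).trans key

theorem lub_unique {d r : ℕ} (A : Fin r → Matrix (Fin d) (Fin d) ℂ)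
    (hA : ∀ k, (A k).IsHermitian)
    (Y₁ Y₂ : Matrix (Fin d) (Fin d) ℂ)
    (h₁ : ∀ k, (Y₁ - A k).PosSemidef) (h₂ : ∀ k, (Y₂ - A k).PosSemidef)
    (hmin₁ : ∀ Y : Matrix (Fin d) (Fin d) ℂ, (∀ k, (Y - A k).PosSemidef) →
      (Y₁.trace).re ≤ (Y.trace).re)
    (hmin₂ : ∀ Y : Matrix (Fin d) (Fin d) ℂ, (∀ k, (Y - A k).PosSemidef) →
      (Y₂.trace).re ≤ (Y.trace).re) :
    Y₁ = Y₂ := by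
  rcases Nat.eq_zero_or_pos d with hd | hd
  · subst hd
    exact Subsingleton.elim _ _
  rcases Nat.eq_zero_or_pos r with hr | hr
  · exfalso
    subst hr
    have h := hmin₁ (Y₁ - 1) (fun k => k.elim0)
    rw [trace_sub, trace_one] at h
    simp only [Complex.sub_re, Complex.natCast_re] at h
    have : (Fintype.card (Fin d) : ℝ) = d := by simp
    rw [this] at h
    have : (0:ℝ) < d := by exact_mod_cast hd
    linarith
  set k₀ : Fin r := ⟨0, hr⟩
  set D := Y₁ - Y₂ with hDdef
  have hD : D.IsHermitian := by
    have h := ((h₁ k₀).1.sub (h₂ k₀).1)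
    rw [sub_sub_sub_cancel_right] at h
    exact h
  set Q : Fin r → Matrix (Fin d) (Fin d) ℂ := fun k => (Y₁ - A k) + (Y₂ - A k) with hQdef
  have hQherm : ∀ k, (Q k).IsHermitian := fun k => (h₁ k).1.add (h₂ k).1
  set t : ℝ := 1 + ∑ k, ∑ i, ∑ j, ‖(Q k) i j‖ with htdef
  have htpos : (0:ℝ) < t := by
    have : (0:ℝ) ≤ ∑ k, ∑ i, ∑ j, ‖(Q k) i j‖ :=
      Finset.sum_nonneg fun k _ => Finset.sum_nonneg fun i _ =>
        Finset.sum_nonneg fun j _ => norm_nonneg _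
    linarith
  have htbd : ∀ k : Fin r, (∑ i, ∑ j, ‖(Q k) i j‖) ≤ t := by
    intro k
    have h := Finset.single_le_sum
      (f := fun k => ∑ i, ∑ j, ‖(Q k) i j‖)
      (fun k _ => Finset.sum_nonneg fun i _ => Finset.sum_nonneg fun j _ => norm_nonneg _)
      (Finset.mem_univ k)
    rw [htdef]; linarith
  -- switch lemma
  have hswitch : ∀ (u v : Fin d → ℂ), star v ⬝ᵥ D.mulVec u = star (D.mulVec v) ⬝ᵥ u := by
    intro u v
    rw [star_mulVec, dotProduct_mulVec, hD]
  -- key quadratic inequality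
  have hkey : ∀ (k : Fin r) (v : Fin d → ℂ),
      (star v ⬝ᵥ (D * D).mulVec v).re ≤ t * (star v ⬝ᵥ (Q k).mulVec v).re := by
    intro k v
    set w : Fin d → ℂ := D.mulVec v with hwdef
    have hm0 : star v ⬝ᵥ (D * D).mulVec v = star w ⬝ᵥ w := by
      rw [← mulVec_mulVec, hswitch]
    set m : ℝ := (star w ⬝ᵥ w).re with hmdef
    have hmnn : 0 ≤ m := by
      rw [hmdef]
      have := dotProduct_star_self_nonneg w
      rw [Complex.le_def] at this
      exact this.1
    have e1 : star w ⬝ᵥ D.mulVec v = star w ⬝ᵥ w := rfl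
    have e2 : star v ⬝ᵥ D.mulVec w = star w ⬝ᵥ w := by rw [hswitch]
    have q1 := quad_re (h₁ k) t w v
    have q2 := quad_re (h₂ k) (-t) w v
    -- expand Q k forms
    have eq1 : ∀ u₁ u₂ : Fin d → ℂ, star u₁ ⬝ᵥ (Q k).mulVec u₂
        = star u₁ ⬝ᵥ (Y₁ - A k).mulVec u₂ + star u₁ ⬝ᵥ (Y₂ - A k).mulVec u₂ := by
      intro u₁ u₂
      rw [hQdef]
      rw [add_mulVec, dotProduct_add]
    have eqD : ∀ u₁ u₂ : Fin d → ℂ, star u₁ ⬝ᵥ D.mulVec u₂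
        = star u₁ ⬝ᵥ (Y₁ - A k).mulVec u₂ - star u₁ ⬝ᵥ (Y₂ - A k).mulVec u₂ := by
      intro u₁ u₂
      have : D = (Y₁ - A k) - (Y₂ - A k) := by rw [hDdef]; abel
      rw [this, sub_mulVec, dotProduct_sub]
    have hb : (star w ⬝ᵥ (Q k).mulVec w).re ≤ t * m := by
      calc (star w ⬝ᵥ (Q k).mulVec w).re ≤ (∑ i, ∑ j, ‖(Q k) i j‖) * m := form_bound _ _
        _ ≤ t * m := mul_le_mul_of_nonneg_right (htbd k) hmnn
    have hwDv : (star w ⬝ᵥ (Y₁ - A k).mulVec v).re - (star w ⬝ᵥ (Y₂ - A k).mulVec v).re = m := by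
      have := eqD w v
      rw [e1] at this
      have := congrArg Complex.re this
      rw [Complex.sub_re] at this
      linarith [this]
    have hvDw : (star v ⬝ᵥ (Y₁ - A k).mulVec w).re - (star v ⬝ᵥ (Y₂ - A k).mulVec w).re = m := by
      have := eqD v w
      rw [e2] at this
      have := congrArg Complex.re this
      rw [Complex.sub_re] at this
      linarith [this]
    have hQw : (star w ⬝ᵥ (Y₁ - A k).mulVec w).re + (star w ⬝ᵥ (Y₂ - A k).mulVec w).re
        = (star w ⬝ᵥ (Q k).mulVec w).re := by
      rw [eq1, Complex.add_re]
    have hQv : (star v ⬝ᵥ (Y₁ - A k).mulVec v).re + (star v ⬝ᵥ (Y₂ - A k).mulVec v).re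
        = (star v ⬝ᵥ (Q k).mulVec v).re := by
      rw [eq1, Complex.add_re]
    rw [hm0, ← hmdef]
    nlinarith [q1, q2, hb, hwDv, hvDw, hQw, hQv, htpos]
  -- the improved matrix
  set c : ℝ := (2*t)⁻¹ with hcdef
  have hcpos : 0 < c := by rw [hcdef]; positivity
  set Y' : Matrix (Fin d) (Fin d) ℂ :=
    (2⁻¹ : ℂ) • (Y₁ + Y₂) - ((c:ℂ)) • (D * D) with hY'def
  have hDDherm : (D * D).IsHermitian := by
    unfold Matrix.IsHermitian
    rw [conjTranspose_mul, hD]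
  have hSherm : ∀ k, ((t:ℂ) • (Q k) - D * D).IsHermitian := by
    intro k
    unfold Matrix.IsHermitian
    rw [conjTranspose_sub, conjTranspose_smul, hQherm k, hDDherm]
    simp
  have hSpsd : ∀ k, ((t:ℂ) • (Q k) - D * D).PosSemidef := by
    intro k
    refine .of_dotProduct_mulVec_nonneg (hSherm k) fun v => ?_
    rw [Complex.le_def]
    constructor
    · rw [sub_mulVec, dotProduct_sub, smul_mulVec, dotProduct_smul]
      simp only [smul_eq_mul, Complex.zero_re, Complex.sub_re, Complex.re_ofReal_mul]
      have := hkey k v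
      linarith
    · rw [Complex.zero_im]
      exact (herm_form_real (hSherm k) v).symm
  have hfeas : ∀ k, (Y' - A k).PosSemidef := by
    intro k
    have hident : Y' - A k = (c:ℂ) • ((t:ℂ) • (Q k) - D * D) := by
      rw [hY'def, hQdef, hcdef]
      push_cast
      match_scalars <;> field_simp <;> ring
    rw [hident]
    refine .of_dotProduct_mulVec_nonneg ?_ fun v => ?_
    · unfold Matrix.IsHermitian
      rw [conjTranspose_smul, hSherm k]
      simp
    · rw [smul_mulVec, dotProduct_smul]
      have h0 := (hSpsd k).dotProduct_mulVec_nonneg v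
      rw [Complex.le_def] at h0 ⊢
      simp only [smul_eq_mul, Complex.re_ofReal_mul, Complex.zero_re, Complex.zero_im,
        Complex.im_ofReal_mul]
      constructor
      · exact mul_nonneg (le_of_lt hcpos) h0.1
      · rw [← h0.2]
        simp
  -- traces
  have hTr12 : Y₂.trace.re = Y₁.trace.re := le_antisymm (hmin₂ Y₁ h₁) (hmin₁ Y₂ h₂)
  have hDD : (D * D).trace.re = ∑ i, ∑ j, ‖D i j‖^2 := by
    simp only [Matrix.trace, Matrix.diag, mul_apply, Complex.re_sum]
    refine Finset.sum_congr rfl fun i _ => ?_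
    refine Finset.sum_congr rfl fun j _ => ?_
    rw [← hD.apply j i]
    simp [Complex.mul_re, Complex.sq_norm, Complex.normSq_apply]
  have hDDnn : 0 ≤ (D * D).trace.re := by
    rw [hDD]
    exact Finset.sum_nonneg fun i _ => Finset.sum_nonneg fun j _ => sq_nonneg _
  have hY'tr : Y'.trace.re = 2⁻¹ * (Y₁.trace.re + Y₂.trace.re) - c * (D * D).trace.re := by
    rw [hY'def, trace_sub, trace_smul, trace_smul, trace_add]
    simp [Complex.sub_re, Complex.smul_re, Complex.add_re, Complex.mul_re]
  have hfin := hmin₁ Y' hfeas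
  rw [hY'tr, hTr12] at hfin
  have hc0 : (D * D).trace.re ≤ 0 := by nlinarith
  have hDzero : D = 0 := by
    have hz : ∑ i, ∑ j, ‖D i j‖^2 = 0 := le_antisymm (by rw [← hDD]; exact hc0)
      (Finset.sum_nonneg fun i _ => Finset.sum_nonneg fun j _ => sq_nonneg _)
    ext i j
    have h1 : ∀ i ∈ (Finset.univ : Finset (Fin d)), (0:ℝ) ≤ ∑ j, ‖D i j‖^2 :=
      fun i _ => Finset.sum_nonneg fun j _ => sq_nonneg _
    have h2 := (Finset.sum_eq_zero_iff_of_nonneg h1).mp hz i (Finset.mem_univ i)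
    have h3 := (Finset.sum_eq_zero_iff_of_nonneg
      (fun j _ => sq_nonneg ‖D i j‖)).mp h2 j (Finset.mem_univ j)
    have : ‖D i j‖ = 0 := by nlinarith [norm_nonneg (D i j)]
    simpa using this
  have := sub_eq_zero.mp hDzero
  exact this
end

section
/- For any self-adjoint operator $A$ on a finite-dimensional Hilbert space, the positive part $A_+$ is the unique minimizer of the trace over the set $\{Y : Y \ge A,\ Y \ge 0\}$: every $Y$ with $Y \ge A$ and $Y \ge 0$ satisfies $\operatorname{Tr} Y \ge \operatorname{Tr} A_+$, with equality iff $Y = A_+$. -/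
open Matrix
open scoped ComplexOrder

open Matrix
open scoped ComplexOrder

-- trace of BᴴB
lemma aux_trace_ctms_re {d : ℕ} (B : Matrix (Fin d) (Fin d) ℂ) :
    ((Bᴴ * B).trace).re = ∑ i, ∑ k, Complex.normSq (B k i) := by
  simp only [Matrix.trace, Matrix.diag_apply, Matrix.mul_apply, Matrix.conjTranspose_apply,
    Complex.re_sum]
  congr 1; funext i; congr 1; funext k
  simp [Complex.normSq_apply]

lemma aux_sqrt {d : ℕ} {M : Matrix (Fin d) (Fin d) ℂ} (hM : M.PosSemidef) :
    (cfc Real.sqrt M)ᴴ = cfc Real.sqrt M ∧ cfc Real.sqrt M * cfc Real.sqrt M = M := by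
  refine ⟨IsSelfAdjoint.star_eq (cfc_predicate Real.sqrt M), ?_⟩
  rw [← cfc_mul Real.sqrt Real.sqrt M]
  conv_rhs => rw [← cfc_id' ℝ M (hM.1 : IsSelfAdjoint M)]
  refine cfc_congr fun x hx => ?_
  obtain ⟨i, rfl⟩ := hM.1.spectrum_real_eq_range_eigenvalues ▸ hx
  exact Real.mul_self_sqrt (hM.eigenvalues_nonneg i)

lemma aux_psd_eq_ctms {d : ℕ} {M : Matrix (Fin d) (Fin d) ℂ} (hM : M.PosSemidef) :
    ∃ B : Matrix (Fin d) (Fin d) ℂ, M = Bᴴ * B :=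
  ⟨cfc Real.sqrt M, by rw [(aux_sqrt hM).1, (aux_sqrt hM).2]⟩

lemma aux_psd_trace_nonneg {d : ℕ} {M : Matrix (Fin d) (Fin d) ℂ} (hM : M.PosSemidef) :
    0 ≤ (M.trace).re := by
  obtain ⟨B, rfl⟩ := aux_psd_eq_ctms hM
  rw [aux_trace_ctms_re]
  exact Finset.sum_nonneg fun i _ => Finset.sum_nonneg fun k _ => Complex.normSq_nonneg _

lemma aux_psd_trace_eq_zero {d : ℕ} {M : Matrix (Fin d) (Fin d) ℂ} (hM : M.PosSemidef)
    (h : (M.trace).re = 0) : M = 0 := by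
  obtain ⟨B, rfl⟩ := aux_psd_eq_ctms hM
  rw [aux_trace_ctms_re] at h
  have hB : B = 0 := by
    ext k i
    have h1 : ∀ i ∈ Finset.univ, (0:ℝ) ≤ ∑ k, Complex.normSq (B k i) := by
      intro i _; exact Finset.sum_nonneg fun k _ => Complex.normSq_nonneg _
    have h2 := (Finset.sum_eq_zero_iff_of_nonneg h1).mp h i (Finset.mem_univ i)
    have h3 : ∀ k ∈ Finset.univ, (0:ℝ) ≤ Complex.normSq (B k i) := by
      intro k _; exact Complex.normSq_nonneg _
    have := (Finset.sum_eq_zero_iff_of_nonneg h3).mp h2 k (Finset.mem_univ k)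
    simpa using Complex.normSq_eq_zero.mp this
  simp [hB]

lemma aux_trace_mul_psd {d : ℕ} {X Z : Matrix (Fin d) (Fin d) ℂ}
    (hX : X.PosSemidef) (hZ : Z.PosSemidef) :
    0 ≤ ((X * Z).trace).re ∧ (((X * Z).trace).re = 0 → X * Z = 0) := by
  set R := cfc Real.sqrt X with hR
  have hRh : Rᴴ = R := (aux_sqrt hX).1
  have hRR : R * R = X := (aux_sqrt hX).2
  have hRZR : (R * Z * R).PosSemidef := by
    have := hZ.mul_mul_conjTranspose_same R
    rwa [hRh] at this
  have htr : (X * Z).trace = (R * Z * R).trace := by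
    rw [← hRR, mul_assoc, trace_mul_comm]
  refine ⟨by rw [htr]; exact aux_psd_trace_nonneg hRZR, fun h0 => ?_⟩
  rw [htr] at h0
  have hz : R * Z * R = 0 := aux_psd_trace_eq_zero hRZR h0
  obtain ⟨C, rfl⟩ := aux_psd_eq_ctms hZ
  have h1 : (C * R)ᴴ * (C * R) = 0 := by
    rw [conjTranspose_mul, hRh]
    calc R * Cᴴ * (C * R) = R * (Cᴴ * C) * R := by simp only [mul_assoc]
    _ = 0 := hz
  have h2 : C * R = 0 := conjTranspose_mul_self_eq_zero.mp h1
  have h3 : R * Cᴴ = 0 := by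
    have := congrArg conjTranspose h2
    rwa [conjTranspose_mul, hRh, conjTranspose_zero] at this
  calc X * (Cᴴ * C) = R * (R * Cᴴ) * C := by rw [← hRR]; simp only [mul_assoc]
  _ = 0 := by rw [h3]; simp

theorem posPart_eq_lub {d : ℕ} (A Y : Matrix (Fin d) (Fin d) ℂ) (hA : A.IsHermitian)
    (hYA : (Y - A).PosSemidef) (hY0 : Y.PosSemidef) :
    ((matPosPart A).trace).re ≤ (Y.trace).re ∧
    ((Y.trace).re = ((matPosPart A).trace).re ↔ Y = matPosPart A) := by
  set U : Matrix (Fin d) (Fin d) ℂ := (hA.eigenvectorUnitary : Matrix (Fin d) (Fin d) ℂ) with hU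
  set ev : Fin d → ℝ := hA.eigenvalues with hev
  have hU1 : U * star U = 1 := (Matrix.mem_unitaryGroup_iff).mp hA.eigenvectorUnitary.2
  have hU2 : star U * U = 1 := (Matrix.mem_unitaryGroup_iff').mp hA.eigenvectorUnitary.2
  -- multiplication rule
  have mulUDU : ∀ f g : Fin d → ℂ,
      (U * diagonal f * star U) * (U * diagonal g * star U)
        = U * diagonal (fun i => f i * g i) * star U := by
    intro f g
    calc (U * diagonal f * star U) * (U * diagonal g * star U)
        = U * diagonal f * (star U * U) * diagonal g * star U := by
          simp only [mul_assoc]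
      _ = U * diagonal (fun i => f i * g i) * star U := by
          rw [hU2, mul_one, mul_assoc U, diagonal_mul_diagonal]
  have psdUDU : ∀ f : Fin d → ℝ, (∀ i, 0 ≤ f i) →
      (U * diagonal (fun i => (f i : ℂ)) * star U).PosSemidef := by
    intro f hf
    have : (diagonal (fun i => (f i : ℂ))).PosSemidef :=
      posSemidef_diagonal_iff.mpr fun i => by
        simpa using Complex.zero_le_real.mpr (hf i)
    simpa [Matrix.star_eq_conjTranspose] using this.mul_mul_conjTranspose_same U
  have smulUDU : ∀ (c : ℂ) (f : Fin d → ℂ),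
      c • (U * diagonal f * star U) = U * diagonal (fun i => c * f i) * star U := by
    intro c f
    show c • (U * diagonal f * star U) = U * diagonal (c • f) * star U
    rw [diagonal_smul, mul_smul_comm, smul_mul_assoc]
  have hdiag : ∀ {f g : Fin d → ℂ}, (∀ i, f i = g i) →
      U * diagonal f * star U = U * diagonal g * star U := by
    intro f g h
    rw [funext h]
  have hspec : A = U * diagonal (fun i => (ev i : ℂ)) * star U := by
    convert hA.spectral_theorem using 2
    rw [Unitary.conjStarAlgAut_apply]; rfl
  -- matAbs
  have habs : matAbs A = U * diagonal (fun i => ((|ev i| : ℝ) : ℂ)) * star U := by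
    have hB := (posSemidef_conjTranspose_mul_self A).1
    have e1 : matAbs A = cfc Real.sqrt (Aᴴ * A) := by
      rw [hB.cfc_eq, IsHermitian.cfc, Unitary.conjStarAlgAut_apply]; rfl
    have e2 : Aᴴ * A = cfc (fun x : ℝ => x * x) A := by
      rw [hA.eq]
      conv_lhs => rw [← cfc_id' ℝ A (@id (IsSelfAdjoint A) hA)]
      rw [← cfc_mul (fun x : ℝ => x) (fun x : ℝ => x) A]
    rw [e1, e2, ← cfc_comp' Real.sqrt (fun x : ℝ => x * x) A (ha := (@id (IsSelfAdjoint A) hA)), hA.cfc_eq,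
      IsHermitian.cfc, Unitary.conjStarAlgAut_apply]
    refine hdiag fun i => ?_
    show ((√(ev i * ev i) : ℝ) : ℂ) = ((|ev i| : ℝ) : ℂ)
    rw [Real.sqrt_mul_self_eq_abs]
  -- matPosPart
  have hpos : matPosPart A = U * diagonal (fun i => ((max (ev i) 0 : ℝ) : ℂ)) * star U := by
    rw [matPosPart, habs]
    conv_lhs => rw [hspec]
    rw [← Matrix.add_mul, ← Matrix.mul_add, diagonal_add, smulUDU]
    refine hdiag fun i => ?_
    rcases le_or_gt (ev i) 0 with h | h
    · rw [max_eq_right h, abs_of_nonpos h]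
      push_cast
      ring_nf
    · rw [max_eq_left h.le, abs_of_pos h]
      ring_nf
  -- projection P
  set χ : Fin d → ℝ := fun i => if 0 < ev i then 1 else 0 with hχ
  set P : Matrix (Fin d) (Fin d) ℂ := U * diagonal (fun i => (χ i : ℂ)) * star U with hPdef
  have hPpsd : P.PosSemidef := psdUDU χ fun i => by by_cases h : 0 < ev i <;> simp [hχ, h]
  have h1Peq : 1 - P = U * diagonal (fun i => ((1 - χ i : ℝ) : ℂ)) * star U := by
    have h1 : (1 : Matrix (Fin d) (Fin d) ℂ) = U * diagonal (fun _ : Fin d => (1:ℂ)) * star U := by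
      rw [diagonal_one, mul_one, hU1]
    rw [h1, hPdef, ← Matrix.sub_mul, ← Matrix.mul_sub, diagonal_sub]
    refine hdiag fun i => ?_
    push_cast
    ring
  have h1Ppsd : (1 - P).PosSemidef := by
    rw [h1Peq]
    exact psdUDU _ fun i => by by_cases h : 0 < ev i <;> simp [hχ, h]
  have hPA : P * A = matPosPart A := by
    rw [hPdef]
    conv_lhs => rw [hspec]
    rw [mulUDU, hpos]
    refine hdiag fun i => ?_
    by_cases h : 0 < ev i
    · simp [hχ, h, max_eq_left h.le]
    · push_neg at h
      simp [hχ, not_lt.mpr h, max_eq_right h]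
  -- trace decomposition
  have hdecomp : Y = P * (Y - A) + (1 - P) * Y + P * A := by
    rw [Matrix.mul_sub, Matrix.sub_mul, Matrix.one_mul]
    abel
  have htr : (Y.trace).re = ((P * (Y - A)).trace).re + (((1 - P) * Y).trace).re
      + ((matPosPart A).trace).re := by
    rw [← hPA]
    conv_lhs => rw [hdecomp]
    rw [trace_add, trace_add, Complex.add_re, Complex.add_re]
  have ht1 := aux_trace_mul_psd hPpsd hYA
  have ht2 := aux_trace_mul_psd h1Ppsd hY0
  constructor
  · rw [htr]
    linarith [ht1.1, ht2.1]
  · constructor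
    · intro h
      rw [htr] at h
      have e1 : ((P * (Y - A)).trace).re = 0 := by linarith [ht1.1, ht2.1]
      have e2 : (((1 - P) * Y).trace).re = 0 := by linarith [ht1.1, ht2.1]
      have z1 := ht1.2 e1
      have z2 := ht2.2 e2
      rw [Matrix.sub_mul, Matrix.one_mul, sub_eq_zero] at z2
      rw [Matrix.mul_sub, sub_eq_zero] at z1
      exact z2.trans (z1.trans hPA)
    · intro h
      rw [h]
end

section
/- For any positive semidefinite operators $A, B$ on a finite-dimensional Hilbert space, $\frac{1}{2}\operatorname{Tr}(A+B) - \frac{1}{2}\|A-B\|_1 \le F(A,B) \le \sqrt{\frac{1}{4}(\operatorname{Tr}(A+B))^2 - \frac{1}{4}\|A-B\|_1^2}$. -/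
open Matrix
open scoped ComplexOrder

noncomputable def Matrix.PosSemidef.sqrt {m : ℕ} {A : Matrix (Fin m) (Fin m) ℂ} (h : A.PosSemidef) :
    Matrix (Fin m) (Fin m) ℂ :=
  h.1.eigenvectorUnitary.1 * diagonal ((↑) ∘ (√·) ∘ h.1.eigenvalues) *
    (star h.1.eigenvectorUnitary : Matrix (Fin m) (Fin m) ℂ)

section PSDSqrt
open scoped MatrixOrder
variable {m : ℕ}

lemma Matrix.PosSemidef.posSemidef_sqrt {A : Matrix (Fin m) (Fin m) ℂ} (h : A.PosSemidef) :
    h.sqrt.PosSemidef := by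
  unfold Matrix.PosSemidef.sqrt
  rw [star_eq_conjTranspose]
  refine (Matrix.PosSemidef.diagonal fun i => ?_).mul_mul_conjTranspose_same _
  simpa using Complex.zero_le_real.mpr (Real.sqrt_nonneg (h.1.eigenvalues i))

lemma Matrix.PosSemidef.sqrt_mul_self {A : Matrix (Fin m) (Fin m) ℂ} (h : A.PosSemidef) :
    h.sqrt * h.sqrt = A := by
  unfold Matrix.PosSemidef.sqrt
  have hU : (star h.1.eigenvectorUnitary : Matrix (Fin m) (Fin m) ℂ) * h.1.eigenvectorUnitary.1 = 1 :=
    Unitary.coe_star_mul_self _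
  have hD : diagonal (((↑) ∘ (√·) ∘ h.1.eigenvalues : Fin m → ℂ)) *
      diagonal ((↑) ∘ (√·) ∘ h.1.eigenvalues) = diagonal ((↑) ∘ h.1.eigenvalues) := by
    rw [diagonal_mul_diagonal]
    congr 1; funext i
    simp only [Function.comp_apply]
    rw [← Complex.ofReal_mul, Real.mul_self_sqrt (h.eigenvalues_nonneg i)]
  calc _ = h.1.eigenvectorUnitary.1 * (diagonal (((↑) ∘ (√·) ∘ h.1.eigenvalues : Fin m → ℂ)) *
      ((star h.1.eigenvectorUnitary : Matrix (Fin m) (Fin m) ℂ) * h.1.eigenvectorUnitary.1) *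
      diagonal ((↑) ∘ (√·) ∘ h.1.eigenvalues)) *
      (star h.1.eigenvectorUnitary : Matrix (Fin m) (Fin m) ℂ) := by
        simp only [Matrix.mul_assoc]
    _ = A := by
        rw [hU, Matrix.mul_one, hD]
        conv_rhs => rw [h.1.spectral_theorem]
        rfl

lemma Matrix.PosSemidef.eq_sqrt_of_sq_eq {M A : Matrix (Fin m) (Fin m) ℂ} (hM : M.PosSemidef)
    (hA : A.PosSemidef) (h : M ^ 2 = A) : M = hA.sqrt :=
  (CFC.sqrt_unique (a := A) (b := M) (by rw [← h, pow_two]) (nonneg_iff_posSemidef.mpr hM)).symm.trans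
    (CFC.sqrt_unique hA.sqrt_mul_self (nonneg_iff_posSemidef.mpr hA.posSemidef_sqrt))

end PSDSqrt

namespace FvdG
variable {m : ℕ}


noncomputable def cdiag (f : Fin m → ℝ) : Matrix (Fin m) (Fin m) ℂ :=
  diagonal fun i => (f i : ℂ)

lemma cdiag_mul (f g : Fin m → ℝ) :
    cdiag f * cdiag g = cdiag (fun i => f i * g i) := by
  simp [cdiag, diagonal_mul_diagonal]

lemma cdiag_conjTranspose (f : Fin m → ℝ) : (cdiag f)ᴴ = cdiag f := by
  simp [cdiag, diagonal_conjTranspose, Complex.conj_ofReal]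

lemma cdiag_add (f g : Fin m → ℝ) :
    cdiag f + cdiag g = cdiag (fun i => f i + g i) := by
  simp [cdiag, diagonal_add]

lemma cdiag_sub (f g : Fin m → ℝ) :
    cdiag f - cdiag g = cdiag (fun i => f i - g i) := by
  simp [cdiag, diagonal_sub]

lemma cdiag_one : (cdiag (fun _ : Fin m => (1:ℝ))) = 1 := by
  simp [cdiag]

lemma cdiag_posSemidef {f : Fin m → ℝ} (hf : ∀ i, 0 ≤ f i) :
    (cdiag f).PosSemidef := by
  refine Matrix.PosSemidef.diagonal fun i => ?_
  simpa using Complex.zero_le_real.mpr (hf i)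

noncomputable def UC (U : Matrix (Fin m) (Fin m) ℂ) (f : Fin m → ℝ) :
    Matrix (Fin m) (Fin m) ℂ :=
  U * cdiag f * Uᴴ

lemma UC_mul {U : Matrix (Fin m) (Fin m) ℂ} (hU : Uᴴ * U = 1) (f g : Fin m → ℝ) :
    UC U f * UC U g = UC U (fun i => f i * g i) := by
  rw [UC, UC, UC, ← cdiag_mul]
  simp only [Matrix.mul_assoc]
  rw [← Matrix.mul_assoc Uᴴ U (cdiag g * Uᴴ), hU, one_mul]

lemma UC_add (U : Matrix (Fin m) (Fin m) ℂ) (f g : Fin m → ℝ) :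
    UC U f + UC U g = UC U (fun i => f i + g i) := by
  rw [UC, UC, UC, ← cdiag_add, Matrix.mul_add, Matrix.add_mul]

lemma UC_sub (U : Matrix (Fin m) (Fin m) ℂ) (f g : Fin m → ℝ) :
    UC U f - UC U g = UC U (fun i => f i - g i) := by
  rw [UC, UC, UC, ← cdiag_sub, Matrix.mul_sub, Matrix.sub_mul]

lemma UC_one {U : Matrix (Fin m) (Fin m) ℂ} (hU : U * Uᴴ = 1) :
    UC U (fun _ => (1:ℝ)) = 1 := by
  rw [UC, cdiag_one, Matrix.mul_one, hU]

lemma UC_zero (U : Matrix (Fin m) (Fin m) ℂ) :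
    UC U (fun _ => (0:ℝ)) = 0 := by
  rw [UC]
  have : cdiag (fun _ : Fin m => (0:ℝ)) = 0 := by simp [cdiag]
  rw [this, Matrix.mul_zero, Matrix.zero_mul]

lemma UC_conjTranspose (U : Matrix (Fin m) (Fin m) ℂ) (f : Fin m → ℝ) :
    (UC U f)ᴴ = UC U f := by
  rw [UC, conjTranspose_mul, conjTranspose_mul, cdiag_conjTranspose,
    conjTranspose_conjTranspose, Matrix.mul_assoc]

lemma UC_isHermitian (U : Matrix (Fin m) (Fin m) ℂ) (f : Fin m → ℝ) :
    (UC U f).IsHermitian := UC_conjTranspose U f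

lemma UC_posSemidef (U : Matrix (Fin m) (Fin m) ℂ) {f : Fin m → ℝ} (hf : ∀ i, 0 ≤ f i) :
    (UC U f).PosSemidef := by
  rw [UC]
  exact (cdiag_posSemidef hf).mul_mul_conjTranspose_same U

lemma UC_trace {U : Matrix (Fin m) (Fin m) ℂ} (hU : Uᴴ * U = 1) (f : Fin m → ℝ) :
    (UC U f).trace = ∑ i, (f i : ℂ) := by
  rw [UC, trace_mul_cycle, hU, one_mul, cdiag]
  simp [trace_diagonal]




lemma psd_diag_re_nonneg {P : Matrix (Fin m) (Fin m) ℂ} (hP : P.PosSemidef) (i : Fin m) :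
    0 ≤ (P i i).re := by
  have h := hP.diag_nonneg (i := i)
  exact (Complex.le_def.mp h).1

lemma psd_trace_re_nonneg {P : Matrix (Fin m) (Fin m) ℂ} (hP : P.PosSemidef) :
    0 ≤ P.trace.re := by
  rw [Matrix.trace, Complex.re_sum]
  exact Finset.sum_nonneg fun i _ => psd_diag_re_nonneg hP i

lemma herm_trace_im {P : Matrix (Fin m) (Fin m) ℂ} (hP : P.IsHermitian) :
    P.trace.im = 0 := by
  have h := congrArg Matrix.trace hP.eq
  rw [trace_conjTranspose] at h
  have h2 := congrArg Complex.im h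
  simp at h2
  linarith

lemma psd_mul_trace_re_nonneg {M N : Matrix (Fin m) (Fin m) ℂ}
    (hM : M.PosSemidef) (hN : N.PosSemidef) : 0 ≤ ((M * N).trace).re := by
  have h1 : M * N = hM.sqrt * (hM.sqrt * N) := by
    rw [← Matrix.mul_assoc, hM.sqrt_mul_self]
  have h2 : (hM.sqrt * N * hM.sqrt).PosSemidef := by
    have := hN.mul_mul_conjTranspose_same hM.sqrt
    rwa [hM.posSemidef_sqrt.1.eq] at this
  rw [h1, trace_mul_comm]
  exact psd_trace_re_nonneg h2

lemma star_mul_self_re (z : ℂ) : (star z * z).re = ‖z‖ ^ 2 := by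
  rw [Complex.star_def, mul_comm, Complex.mul_conj, Complex.ofReal_re, ← Complex.sq_norm]

lemma trace_entry_sum (X Y : Matrix (Fin m) (Fin m) ℂ) :
    (Xᴴ * Y).trace = ∑ p : Fin m × Fin m, star (X p.2 p.1) * Y p.2 p.1 := by
  rw [Fintype.sum_prod_type]
  simp only [Matrix.trace, Matrix.diag, Matrix.mul_apply, Matrix.conjTranspose_apply]

lemma trace_conjTranspose_mul_re (X : Matrix (Fin m) (Fin m) ℂ) :
    ((Xᴴ * X).trace).re = ∑ p : Fin m × Fin m, ‖X p.1 p.2‖ ^ 2 := by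
  rw [trace_entry_sum, Complex.re_sum]
  simp only [star_mul_self_re]
  rw [Fintype.sum_prod_type, Fintype.sum_prod_type]
  exact Finset.sum_comm

lemma trace_abs_le (X Y : Matrix (Fin m) (Fin m) ℂ) :
    ‖(Xᴴ * Y).trace‖ ≤
      ∑ p : Fin m × Fin m, ‖X p.1 p.2‖ * ‖Y p.1 p.2‖ := by
  rw [trace_entry_sum]
  calc ‖∑ p : Fin m × Fin m, star (X p.2 p.1) * Y p.2 p.1‖
      ≤ ∑ p : Fin m × Fin m, ‖star (X p.2 p.1) * Y p.2 p.1‖ :=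
        norm_sum_le _ _
    _ = ∑ p : Fin m × Fin m, ‖X p.2 p.1‖ * ‖Y p.2 p.1‖ := by
        refine Finset.sum_congr rfl fun p _ => ?_
        rw [norm_mul]
        simp [Complex.star_def, Complex.norm_conj]
    _ = ∑ p : Fin m × Fin m, ‖X p.1 p.2‖ * ‖Y p.1 p.2‖ := by
        rw [Fintype.sum_prod_type, Fintype.sum_prod_type]
        exact Finset.sum_comm

lemma trace_CS (X Y : Matrix (Fin m) (Fin m) ℂ) :
    ‖(Xᴴ * Y).trace‖ ≤
      Real.sqrt ((Xᴴ * X).trace).re * Real.sqrt ((Yᴴ * Y).trace).re := by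
  have h2 := Finset.sum_mul_sq_le_sq_mul_sq Finset.univ
    (fun p : Fin m × Fin m => ‖X p.1 p.2‖) (fun p => ‖Y p.1 p.2‖)
  rw [trace_conjTranspose_mul_re, trace_conjTranspose_mul_re]
  have h0 : (0:ℝ) ≤ ∑ p : Fin m × Fin m, ‖X p.1 p.2‖ * ‖Y p.1 p.2‖ :=
    Finset.sum_nonneg fun p _ => mul_nonneg (norm_nonneg _) (norm_nonneg _)
  calc ‖(Xᴴ * Y).trace‖
      ≤ ∑ p : Fin m × Fin m, ‖X p.1 p.2‖ * ‖Y p.1 p.2‖ :=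
        trace_abs_le X Y
    _ = Real.sqrt ((∑ p : Fin m × Fin m,
          ‖X p.1 p.2‖ * ‖Y p.1 p.2‖)^2) := by rw [Real.sqrt_sq h0]
    _ ≤ Real.sqrt ((∑ p : Fin m × Fin m, ‖X p.1 p.2‖ ^ 2) *
          (∑ p : Fin m × Fin m, ‖Y p.1 p.2‖ ^ 2)) := Real.sqrt_le_sqrt h2
    _ = _ := Real.sqrt_mul (Finset.sum_nonneg fun p _ => sq_nonneg _) _


noncomputable def eU {P : Matrix (Fin m) (Fin m) ℂ} (hP : P.IsHermitian) :
    Matrix (Fin m) (Fin m) ℂ := hP.eigenvectorUnitary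

lemma eU_mul_star {P : Matrix (Fin m) (Fin m) ℂ} (hP : P.IsHermitian) :
    eU hP * (eU hP)ᴴ = 1 := by
  rw [eU, ← Matrix.star_eq_conjTranspose]
  exact (Matrix.mem_unitaryGroup_iff).mp hP.eigenvectorUnitary.2

lemma star_mul_eU {P : Matrix (Fin m) (Fin m) ℂ} (hP : P.IsHermitian) :
    (eU hP)ᴴ * eU hP = 1 := by
  rw [eU, ← Matrix.star_eq_conjTranspose]
  exact (Matrix.mem_unitaryGroup_iff').mp hP.eigenvectorUnitary.2

lemma herm_eq_UC {P : Matrix (Fin m) (Fin m) ℂ} (hP : P.IsHermitian) :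
    P = UC (eU hP) hP.eigenvalues := by
  rw [UC, eU, cdiag, ← Matrix.star_eq_conjTranspose]
  exact hP.spectral_theorem

lemma UC_inj {U : Matrix (Fin m) (Fin m) ℂ} (hU : Uᴴ * U = 1) {f g : Fin m → ℝ}
    (h : UC U f = UC U g) : f = g := by
  have key : ∀ D : Matrix (Fin m) (Fin m) ℂ, Uᴴ * (U * D * Uᴴ) * U = D := by
    intro D
    calc Uᴴ * (U * D * Uᴴ) * U = (Uᴴ * U) * D * (Uᴴ * U) := by simp only [Matrix.mul_assoc]
      _ = D := by rw [hU, Matrix.one_mul, Matrix.mul_one]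
  have h2 : cdiag f = cdiag g := by
    have h3 := congrArg (fun M => Uᴴ * M * U) h
    simpa only [UC, key] using h3
  funext i
  have := congrArg (fun M => M i i) h2
  simpa [cdiag, diagonal_apply_eq, Complex.ofReal_inj] using this

lemma matAbs_eq_of_sq {X M : Matrix (Fin m) (Fin m) ℂ} (hM : M.PosSemidef)
    (h : M * M = Xᴴ * X) : matAbs X = M :=
  (hM.eq_sqrt_of_sq_eq (posSemidef_conjTranspose_mul_self X) (by rw [pow_two, h])).symm

lemma matAbs_posSemidef (X : Matrix (Fin m) (Fin m) ℂ) : (matAbs X).PosSemidef :=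
  (posSemidef_conjTranspose_mul_self X).posSemidef_sqrt

lemma matAbs_mul_self (X : Matrix (Fin m) (Fin m) ℂ) : matAbs X * matAbs X = Xᴴ * X :=
  (posSemidef_conjTranspose_mul_self X).sqrt_mul_self

lemma matAbs_of_psd {P : Matrix (Fin m) (Fin m) ℂ} (hP : P.PosSemidef) : matAbs P = P :=
  matAbs_eq_of_sq hP (by rw [hP.1.eq])




/- partial isometry between two projections of equal trace -/
lemma proj_isometry_diag {s₁ s₂ : Finset (Fin m)} (hcard : s₁.card = s₂.card) :
    ∃ K : Matrix (Fin m) (Fin m) ℂ,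
      Kᴴ * K = Matrix.diagonal (fun i => if i ∈ s₁ then (1:ℂ) else 0) ∧
      K * Kᴴ = Matrix.diagonal (fun i => if i ∈ s₂ then (1:ℂ) else 0) := by
  classical
  have e : {i // i ∈ s₁} ≃ {i // i ∈ s₂} :=
    Fintype.equivOfCardEq (by simp [Fintype.card_coe, hcard])
  set φ : Fin m → Fin m := fun j => if h : j ∈ s₁ then (e ⟨j, h⟩ : Fin m) else j with hφ
  have hφ_mem : ∀ j ∈ s₁, φ j ∈ s₂ := by
    intro j hj
    simp only [hφ, dif_pos hj]
    exact (e ⟨j, hj⟩).2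
  have hφ_inj : ∀ j ∈ s₁, ∀ j' ∈ s₁, φ j = φ j' → j = j' := by
    intro j hj j' hj' hE
    simp only [hφ, dif_pos hj, dif_pos hj'] at hE
    have := e.injective (Subtype.ext hE)
    exact congrArg Subtype.val this
  have hφ_surj : ∀ a ∈ s₂, ∃ j ∈ s₁, φ j = a := by
    intro a ha
    refine ⟨(e.symm ⟨a, ha⟩ : Fin m), (e.symm ⟨a, ha⟩).2, ?_⟩
    simp only [hφ, dif_pos (e.symm ⟨a, ha⟩).2]
    have : e ⟨(e.symm ⟨a, ha⟩ : Fin m), (e.symm ⟨a, ha⟩).2⟩ = ⟨a, ha⟩ := by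
      simpa using e.apply_symm_apply ⟨a, ha⟩
    rw [this]
  refine ⟨Matrix.of fun i j => if j ∈ s₁ ∧ φ j = i then 1 else 0, ?_, ?_⟩
  · ext a b
    simp only [Matrix.mul_apply, Matrix.conjTranspose_apply, Matrix.of_apply]
    by_cases ha : a ∈ s₁
    · by_cases hb : b ∈ s₁
      · simp only [ha, hb, true_and]
        rw [Finset.sum_eq_single (φ a)]
        · by_cases hab : a = b
          · subst hab
            simp [Matrix.diagonal_apply_eq, ha]
          · have : ¬ (φ b = φ a) := fun hc => hab (hφ_inj a ha b hb hc.symm)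
            simp [this, Matrix.diagonal_apply_ne _ hab, hab]
        · intro i _ hi
          simp [Ne.symm hi]
        · intro h; exact absurd (Finset.mem_univ _) h
      · have : ∀ i, (star (if a ∈ s₁ ∧ φ a = i then (1:ℂ) else 0)) *
            (if b ∈ s₁ ∧ φ b = i then 1 else 0) = 0 := by
          intro i; simp [hb]
        rw [Finset.sum_congr rfl fun i _ => this i, Finset.sum_const_zero]
        have hab : a ≠ b := fun hc => hb (hc ▸ ha)
        simp [Matrix.diagonal_apply_ne _ hab]
    · have : ∀ i, (star (if a ∈ s₁ ∧ φ a = i then (1:ℂ) else 0)) *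
          (if b ∈ s₁ ∧ φ b = i then 1 else 0) = 0 := by
        intro i; simp [ha]
      rw [Finset.sum_congr rfl fun i _ => this i, Finset.sum_const_zero]
      by_cases hab : a = b
      · subst hab; simp [ha]
      · simp [Matrix.diagonal_apply_ne _ hab]
  · ext a b
    simp only [Matrix.mul_apply, Matrix.conjTranspose_apply, Matrix.of_apply]
    by_cases hab : a = b
    · subst hab
      by_cases ha : a ∈ s₂
      · obtain ⟨j₀, hj₀, hφj₀⟩ := hφ_surj a ha
        rw [Finset.sum_eq_single j₀]
        · simp [hj₀, hφj₀, ha]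
        · intro j _ hj
          by_cases hjs : j ∈ s₁ ∧ φ j = a
          · exact absurd (hφ_inj j hjs.1 j₀ hj₀ (hjs.2.trans hφj₀.symm)) hj
          · simp [hjs]
        · intro h; exact absurd (Finset.mem_univ _) h
      · have : ∀ j, (if j ∈ s₁ ∧ φ j = a then (1:ℂ) else 0) *
            star (if j ∈ s₁ ∧ φ j = a then (1:ℂ) else 0) = 0 := by
          intro j
          by_cases hjs : j ∈ s₁ ∧ φ j = a
          · exact absurd (hjs.2 ▸ hφ_mem j hjs.1) ha
          · simp [hjs]
        rw [Finset.sum_congr rfl fun j _ => this j, Finset.sum_const_zero]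
        simp [ha]
    · have : ∀ j, (if j ∈ s₁ ∧ φ j = a then (1:ℂ) else 0) *
          star (if j ∈ s₁ ∧ φ j = b then (1:ℂ) else 0) = 0 := by
        intro j
        by_cases hjs : j ∈ s₁ ∧ φ j = a
        · have : ¬ (j ∈ s₁ ∧ φ j = b) := fun hc => hab (hjs.2 ▸ hc.2 ▸ rfl)
          simp [this]
        · simp [hjs]
      rw [Finset.sum_congr rfl fun j _ => this j, Finset.sum_const_zero]
      simp [Matrix.diagonal_apply_ne _ hab]


lemma conj_sandwich_l {U W K L : Matrix (Fin m) (Fin m) ℂ} (hW : Wᴴ * W = 1) :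
    (W * K * Uᴴ)ᴴ * (W * L * Uᴴ) = U * (Kᴴ * L) * Uᴴ := by
  simp only [conjTranspose_mul, conjTranspose_conjTranspose, Matrix.mul_assoc]
  rw [← Matrix.mul_assoc Wᴴ W, hW, Matrix.one_mul]

lemma conj_sandwich_r {U W K L : Matrix (Fin m) (Fin m) ℂ} (hU : Uᴴ * U = 1) :
    (W * K * Uᴴ) * (W * L * Uᴴ)ᴴ = W * (K * Lᴴ) * Wᴴ := by
  simp only [conjTranspose_mul, conjTranspose_conjTranspose, Matrix.mul_assoc]
  rw [← Matrix.mul_assoc Uᴴ U, hU, Matrix.one_mul]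

lemma proj_eigen_01 {E : Matrix (Fin m) (Fin m) ℂ} (hE2 : E * E = E) (hEh : E.IsHermitian) :
    ∀ i, hEh.eigenvalues i = 0 ∨ hEh.eigenvalues i = 1 := by
  have hs := herm_eq_UC hEh
  have h1 : UC (eU hEh) (fun i => hEh.eigenvalues i * hEh.eigenvalues i)
      = UC (eU hEh) hEh.eigenvalues := by
    rw [← UC_mul (star_mul_eU hEh), ← hs, hE2]
  have h2 := UC_inj (star_mul_eU hEh) h1
  intro i
  have hi := congrFun h2 i
  have h0 : hEh.eigenvalues i * (hEh.eigenvalues i - 1) = 0 := by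
    rw [mul_sub, mul_one, hi, sub_self]
  rcases mul_eq_zero.mp h0 with h | h
  · exact Or.inl h
  · exact Or.inr (by linarith [sub_eq_zero.mp h])

lemma proj_trace_card {E : Matrix (Fin m) (Fin m) ℂ} (hE2 : E * E = E) (hEh : E.IsHermitian) :
    E.trace = ((Finset.univ.filter (fun i => hEh.eigenvalues i ≠ 0)).card : ℂ) := by
  have h01 := proj_eigen_01 hE2 hEh
  calc E.trace = (UC (eU hEh) hEh.eigenvalues).trace := by rw [← herm_eq_UC hEh]
    _ = ∑ i, ((hEh.eigenvalues i : ℝ) : ℂ) := UC_trace (star_mul_eU hEh) _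
    _ = ∑ i, (if hEh.eigenvalues i ≠ 0 then (1:ℂ) else 0) := by
        refine Finset.sum_congr rfl fun i _ => ?_
        rcases h01 i with h | h <;> simp [h]
    _ = _ := by rw [Finset.sum_boole]

lemma proj_isometry {E F : Matrix (Fin m) (Fin m) ℂ}
    (hE2 : E * E = E) (hEh : E.IsHermitian) (hF2 : F * F = F) (hFh : F.IsHermitian)
    (htr : E.trace = F.trace) :
    ∃ Z : Matrix (Fin m) (Fin m) ℂ, Zᴴ * Z = E ∧ Z * Zᴴ = F := by
  classical
  set s₁ := Finset.univ.filter (fun i => hEh.eigenvalues i ≠ 0) with hs₁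
  set s₂ := Finset.univ.filter (fun i => hFh.eigenvalues i ≠ 0) with hs₂
  have hcard : s₁.card = s₂.card := by
    have := (proj_trace_card hE2 hEh).symm.trans (htr.trans (proj_trace_card hF2 hFh))
    exact_mod_cast this
  obtain ⟨K, hK1, hK2⟩ := proj_isometry_diag (m := m) hcard
  have hEcd : cdiag hEh.eigenvalues = Matrix.diagonal (fun i => if i ∈ s₁ then (1:ℂ) else 0) := by
    have hfn : (fun i => ((hEh.eigenvalues i : ℝ) : ℂ)) = (fun i => if i ∈ s₁ then (1:ℂ) else 0) := by
      funext i
      rcases proj_eigen_01 hE2 hEh i with h | h <;> simp [h, hs₁, Finset.mem_filter]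
    rw [cdiag, hfn]
  have hFcd : cdiag hFh.eigenvalues = Matrix.diagonal (fun i => if i ∈ s₂ then (1:ℂ) else 0) := by
    have hfn : (fun i => ((hFh.eigenvalues i : ℝ) : ℂ)) = (fun i => if i ∈ s₂ then (1:ℂ) else 0) := by
      funext i
      rcases proj_eigen_01 hF2 hFh i with h | h <;> simp [h, hs₂, Finset.mem_filter]
    rw [cdiag, hfn]
  refine ⟨eU hFh * K * (eU hEh)ᴴ, ?_, ?_⟩
  · rw [conj_sandwich_l (star_mul_eU hFh), hK1, ← hEcd, ← UC, ← herm_eq_UC hEh]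
  · rw [conj_sandwich_r (star_mul_eU hEh), hK2, ← hFcd, ← UC, ← herm_eq_UC hFh]

theorem exists_polar (X : Matrix (Fin m) (Fin m) ℂ) :
    ∃ V : Matrix (Fin m) (Fin m) ℂ, Vᴴ * V = 1 ∧ V * Vᴴ = 1 ∧ X = V * matAbs X := by
  classical
  have hH : (Xᴴ * X).PosSemidef := posSemidef_conjTranspose_mul_self X
  have h1 : (Xᴴ * X).IsHermitian := hH.1
  set U : Matrix (Fin m) (Fin m) ℂ := eU h1 with hUdef
  set lam : Fin m → ℝ := h1.eigenvalues with hlamdef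
  have hUl : Uᴴ * U = 1 := star_mul_eU h1
  have hUr : U * Uᴴ = 1 := eU_mul_star h1
  have hXX : Xᴴ * X = UC U lam := herm_eq_UC h1
  have hlam : ∀ i, 0 ≤ lam i := fun i => hH.eigenvalues_nonneg i
  set fabs : Fin m → ℝ := fun i => Real.sqrt (lam i) with hfabs
  set fpinv : Fin m → ℝ := fun i => (Real.sqrt (lam i))⁻¹ with hfpinv
  set fchi : Fin m → ℝ := fun i => if lam i = 0 then 0 else 1 with hfchi
  have hsqrt_ne : ∀ i, lam i ≠ 0 → Real.sqrt (lam i) ≠ 0 := fun i hi =>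
    Real.sqrt_ne_zero'.mpr (lt_of_le_of_ne (hlam i) (Ne.symm hi))
  have habs : matAbs X = UC U fabs := by
    refine matAbs_eq_of_sq (UC_posSemidef U fun i => Real.sqrt_nonneg _) ?_
    rw [UC_mul hUl, hXX]
    have hfn : (fun i => fabs i * fabs i) = lam := by
      funext i; exact Real.mul_self_sqrt (hlam i)
    rw [hfn]
  set W : Matrix (Fin m) (Fin m) ℂ := X * UC U fpinv with hWdef
  set Pi : Matrix (Fin m) (Fin m) ℂ := UC U fchi with hPidef
  -- WᴴW = Pi
  have hWW : Wᴴ * W = Pi := by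
    have e0 : Wᴴ * W = UC U fpinv * ((Xᴴ * X) * UC U fpinv) := by
      rw [hWdef, conjTranspose_mul, UC_conjTranspose]
      simp only [Matrix.mul_assoc]
    have e1 : (Xᴴ * X) * UC U fpinv = UC U (fun i => lam i * fpinv i) := by
      rw [hXX]; exact UC_mul hUl _ _
    have e2 : UC U fpinv * UC U (fun i => lam i * fpinv i)
        = UC U (fun i => fpinv i * (lam i * fpinv i)) := UC_mul hUl _ _
    have hfn : (fun i => fpinv i * (lam i * fpinv i)) = fchi := by
      funext i
      by_cases hi : lam i = 0
      · simp [hfpinv, hfchi, hi]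
      · have hs := hsqrt_ne i hi
        have : Real.sqrt (lam i) * Real.sqrt (lam i) = lam i := Real.mul_self_sqrt (hlam i)
        simp only [hfpinv, hfchi, hi, if_false]
        field_simp
        linarith [Real.sq_sqrt (hlam i)]
    rw [e0, e1, e2, hfn]
  -- X * Pi = X
  have hXPi : X * Pi = X := by
    have hsub : Pi - 1 = UC U (fun i => fchi i - 1) := by
      rw [hPidef, ← UC_one hUr, UC_sub]
    have hz : (X * (Pi - 1))ᴴ * (X * (Pi - 1)) = 0 := by
      have e0 : (X * (Pi - 1))ᴴ * (X * (Pi - 1))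
          = (Pi - 1)ᴴ * ((Xᴴ * X) * (Pi - 1)) := by
        simp only [conjTranspose_mul, Matrix.mul_assoc]
      have hherm : (Pi - 1)ᴴ = Pi - 1 := by
        rw [hsub, UC_conjTranspose]
      have e1 : (Xᴴ * X) * (Pi - 1) = UC U (fun i => lam i * (fchi i - 1)) := by
        rw [hXX, hsub]; exact UC_mul hUl _ _
      have e2 : UC U (fun i => fchi i - 1) * UC U (fun i => lam i * (fchi i - 1))
          = UC U (fun i => (fchi i - 1) * (lam i * (fchi i - 1))) := UC_mul hUl _ _
      have hfn : (fun i => (fchi i - 1) * (lam i * (fchi i - 1))) = (fun _ => (0:ℝ)) := by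
        funext i
        by_cases hi : lam i = 0 <;> simp [hfchi, hi]
      rw [e0, hherm, e1, hsub, e2, hfn, UC_zero]
    have := conjTranspose_mul_self_eq_zero.mp hz
    have h2 : X * Pi - X = 0 := by
      rw [← this, Matrix.mul_sub, Matrix.mul_one]
    exact sub_eq_zero.mp h2
  -- W * |X| = X
  have hWM : W * matAbs X = X := by
    rw [habs, hWdef, Matrix.mul_assoc, UC_mul hUl]
    have hfn : (fun i => fpinv i * fabs i) = fchi := by
      funext i
      by_cases hi : lam i = 0
      · simp [hfpinv, hfabs, hfchi, hi]
      · simp [hfpinv, hfabs, hfchi, hi, inv_mul_cancel₀ (hsqrt_ne i hi)]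
    rw [hfn, ← hPidef, hXPi]
  -- W * Pi = W
  have hWPi : W * Pi = W := by
    rw [hWdef, hPidef, Matrix.mul_assoc, UC_mul hUl]
    have hfn : (fun i => fpinv i * fchi i) = fpinv := by
      funext i
      by_cases hi : lam i = 0 <;> simp [hfpinv, hfchi, hi]
    rw [hfn]
  set Θ : Matrix (Fin m) (Fin m) ℂ := W * Wᴴ with hΘdef
  have hΘh : Θᴴ = Θ := by rw [hΘdef, conjTranspose_mul, conjTranspose_conjTranspose]
  have hΘW : Θ * W = W := by rw [hΘdef, Matrix.mul_assoc, hWW, hWPi]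
  have hΘ2 : Θ * Θ = Θ := by
    calc Θ * Θ = (Θ * W) * Wᴴ := by rw [hΘdef]; simp only [Matrix.mul_assoc]
      _ = Θ := by rw [hΘW, hΘdef]
  have hPih : Piᴴ = Pi := by rw [hPidef, UC_conjTranspose]
  have hPi2 : Pi * Pi = Pi := by
    rw [hPidef, UC_mul hUl]
    have hfn : (fun i => fchi i * fchi i) = fchi := by
      funext i; by_cases hi : lam i = 0 <;> simp [hfchi, hi]
    rw [hfn]
  have htrPiΘ : Pi.trace = Θ.trace := by
    rw [← hWW, hΘdef, trace_mul_comm]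
  -- complement projections
  have hcE2 : (1 - Pi) * (1 - Pi) = 1 - Pi := by
    have : (1 - Pi) * (1 - Pi) = 1 - Pi - (Pi - Pi * Pi) := by noncomm_ring
    rw [this, hPi2, sub_self, sub_zero]
  have hcEh : (1 - Pi).IsHermitian := by
    show (1 - Pi)ᴴ = 1 - Pi
    rw [conjTranspose_sub, conjTranspose_one, hPih]
  have hcF2 : (1 - Θ) * (1 - Θ) = 1 - Θ := by
    have : (1 - Θ) * (1 - Θ) = 1 - Θ - (Θ - Θ * Θ) := by noncomm_ring
    rw [this, hΘ2, sub_self, sub_zero]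
  have hcFh : (1 - Θ).IsHermitian := by
    show (1 - Θ)ᴴ = 1 - Θ
    rw [conjTranspose_sub, conjTranspose_one, hΘh]
  have htrc : (1 - Pi).trace = (1 - Θ).trace := by
    rw [trace_sub, trace_sub, htrPiΘ]
  obtain ⟨Z, hZ1, hZ2⟩ := proj_isometry hcE2 hcEh hcF2 hcFh htrc
  -- Z * Pi = 0
  have hPi10 : (1 - Pi) * Pi = 0 := by
    rw [Matrix.sub_mul, Matrix.one_mul, hPi2, sub_self]
  have hZPi : Z * Pi = 0 := by
    have hz : (Z * Pi)ᴴ * (Z * Pi) = 0 := by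
      calc (Z * Pi)ᴴ * (Z * Pi) = Piᴴ * ((Zᴴ * Z) * Pi) := by
            simp only [conjTranspose_mul, Matrix.mul_assoc]
        _ = Piᴴ * ((1 - Pi) * Pi) := by rw [hZ1]
        _ = 0 := by rw [hPi10, Matrix.mul_zero]
    exact conjTranspose_mul_self_eq_zero.mp hz
  -- Θ * Z = 0
  have hΘ10 : Θ * (1 - Θ) = 0 := by
    rw [Matrix.mul_sub, Matrix.mul_one, hΘ2, sub_self]
  have hΘZ : Θ * Z = 0 := by
    have hz : (Θ * Z) * (Θ * Z)ᴴ = 0 := by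
      calc (Θ * Z) * (Θ * Z)ᴴ = Θ * ((Z * Zᴴ) * Θᴴ) := by
            simp only [conjTranspose_mul, Matrix.mul_assoc]
        _ = Θ * ((1 - Θ) * Θ) := by rw [hZ2, hΘh]
        _ = 0 := by
            have : (1 - Θ) * Θ = 0 := by
              rw [Matrix.sub_mul, Matrix.one_mul, hΘ2, sub_self]
            rw [this, Matrix.mul_zero]
    exact self_mul_conjTranspose_eq_zero.mp hz
  -- cross terms
  have hWhΘ : Wᴴ * Θ = Wᴴ := by
    have := congrArg conjTranspose hΘW
    rwa [conjTranspose_mul, hΘh] at this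
  have hWZ : Wᴴ * Z = 0 := by
    rw [← hWhΘ, Matrix.mul_assoc, hΘZ, Matrix.mul_zero]
  have hZW : Zᴴ * W = 0 := by
    have := congrArg conjTranspose hWZ
    rwa [conjTranspose_mul, conjTranspose_conjTranspose, conjTranspose_zero] at this
  have hPiWh : Pi * Wᴴ = Wᴴ := by
    have := congrArg conjTranspose hWPi
    rwa [conjTranspose_mul, hPih] at this
  have hZWh : Z * Wᴴ = 0 := by
    rw [← hPiWh, ← Matrix.mul_assoc, hZPi, Matrix.zero_mul]
  have hWZh : W * Zᴴ = 0 := by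
    have := congrArg conjTranspose hZWh
    rwa [conjTranspose_mul, conjTranspose_conjTranspose, conjTranspose_zero] at this
  refine ⟨W + Z, ?_, ?_, ?_⟩
  · rw [conjTranspose_add, Matrix.add_mul, Matrix.mul_add, Matrix.mul_add,
      hWW, hWZ, hZW, hZ1]
    abel
  · rw [conjTranspose_add, Matrix.add_mul, Matrix.mul_add, Matrix.mul_add,
      hWZh, hZWh, hZ2, ← hΘdef]
    abel
  · have hPiM : Pi * matAbs X = matAbs X := by
      rw [habs, hPidef, UC_mul hUl]
      have hfn : (fun i => fchi i * fabs i) = fabs := by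
        funext i
        by_cases hi : lam i = 0 <;> simp [hfchi, hfabs, hi]
      rw [hfn]
    have hZM : Z * matAbs X = 0 := by
      rw [← hPiM, ← Matrix.mul_assoc, hZPi, Matrix.zero_mul]
    rw [Matrix.add_mul, hWM, hZM, add_zero]

lemma conj_sandwich_m {U A B : Matrix (Fin m) (Fin m) ℂ} (hU : Uᴴ * U = 1) :
    (U * A * Uᴴ) * (U * B * Uᴴ) = U * (A * B) * Uᴴ := by
  simp only [Matrix.mul_assoc]
  rw [← Matrix.mul_assoc Uᴴ U (B * Uᴴ), hU, Matrix.one_mul]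

lemma traceNorm_nonneg (X : Matrix (Fin m) (Fin m) ℂ) : 0 ≤ traceNorm X :=
  psd_trace_re_nonneg (matAbs_posSemidef X)

lemma traceNorm_psd {P : Matrix (Fin m) (Fin m) ℂ} (hP : P.PosSemidef) :
    traceNorm P = P.trace.re := by
  rw [traceNorm, matAbs_of_psd hP]

lemma re_trace_mul_le_traceNorm {V : Matrix (Fin m) (Fin m) ℂ}
    (X : Matrix (Fin m) (Fin m) ℂ) (hV : Vᴴ * V = 1) :
    ((V * X).trace).re ≤ traceNorm X := by
  obtain ⟨V₀, hV₀l, hV₀r, hXp⟩ := exists_polar X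
  set M := matAbs X with hMdef
  have hM : M.PosSemidef := matAbs_posSemidef X
  have hSS : hM.sqrt * hM.sqrt = M := hM.sqrt_mul_self
  have hSh : (hM.sqrt)ᴴ = hM.sqrt := hM.posSemidef_sqrt.1
  have hNN : (V * V₀)ᴴ * (V * V₀) = 1 := by
    calc (V * V₀)ᴴ * (V * V₀) = V₀ᴴ * ((Vᴴ * V) * V₀) := by
          simp only [conjTranspose_mul, Matrix.mul_assoc]
      _ = 1 := by rw [hV, Matrix.one_mul, hV₀l]
  have e0 : V * X = V * V₀ * M := by
    rw [Matrix.mul_assoc]; exact congrArg _ hXp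
  have e1 : ((hM.sqrt)ᴴ * ((V * V₀) * hM.sqrt)).trace = (V * V₀ * M).trace := by
    calc ((hM.sqrt)ᴴ * ((V * V₀) * hM.sqrt)).trace
        = (hM.sqrt * ((V * V₀) * hM.sqrt)).trace := by rw [hSh]
      _ = (((V * V₀) * hM.sqrt) * hM.sqrt).trace := by rw [trace_mul_comm]
      _ = ((V * V₀) * (hM.sqrt * hM.sqrt)).trace := by rw [Matrix.mul_assoc]
      _ = (V * V₀ * M).trace := by rw [hSS]
  have h2 : (hM.sqrt)ᴴ * hM.sqrt = M := by rw [hSh, hSS]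
  have h3 : ((V * V₀) * hM.sqrt)ᴴ * ((V * V₀) * hM.sqrt) = M := by
    calc ((V * V₀) * hM.sqrt)ᴴ * ((V * V₀) * hM.sqrt)
        = (hM.sqrt)ᴴ * (((V * V₀)ᴴ * (V * V₀)) * hM.sqrt) := by
          simp only [conjTranspose_mul, Matrix.mul_assoc]
      _ = M := by rw [hNN, Matrix.one_mul, h2]
  have hCS := trace_CS hM.sqrt ((V * V₀) * hM.sqrt)
  rw [h2, h3] at hCS
  have h5 : Real.sqrt ((M.trace).re) * Real.sqrt ((M.trace).re)
      = (M.trace).re := Real.mul_self_sqrt (psd_trace_re_nonneg hM)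
  calc ((V * X).trace).re ≤ ‖(V * X).trace‖ := Complex.re_le_norm _
    _ = ‖((hM.sqrt)ᴴ * ((V * V₀) * hM.sqrt)).trace‖ := by rw [e0, ← e1]
    _ ≤ Real.sqrt ((M.trace).re) * Real.sqrt ((M.trace).re) := hCS
    _ = traceNorm X := h5

lemma traceNorm_conjTranspose (X : Matrix (Fin m) (Fin m) ℂ) :
    traceNorm Xᴴ = traceNorm X := by
  obtain ⟨V, hVl, hVr, hXp⟩ := exists_polar X
  set M := matAbs X with hMdef
  have hMh : Mᴴ = M := (matAbs_posSemidef X).1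
  have habs : matAbs Xᴴ = V * M * Vᴴ := by
    refine matAbs_eq_of_sq ((matAbs_posSemidef X).mul_mul_conjTranspose_same V) ?_
    have h1 : (V * M * Vᴴ) * (V * M * Vᴴ) = V * (M * M) * Vᴴ := conj_sandwich_m hVl
    have h3 : X * Xᴴ = V * (M * M) * Vᴴ := by
      rw [hXp, conjTranspose_mul, hMh]
      simp only [Matrix.mul_assoc]
    rw [h1, conjTranspose_conjTranspose, h3]
  rw [traceNorm, traceNorm, habs, trace_mul_cycle, hVl, Matrix.one_mul, ← hMdef]

lemma traceNorm_mul_le (X Y : Matrix (Fin m) (Fin m) ℂ) :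
    traceNorm (Xᴴ * Y) ≤
      Real.sqrt (((Xᴴ * X).trace).re) * Real.sqrt (((Yᴴ * Y).trace).re) := by
  obtain ⟨V, hVl, hVr, hXp⟩ := exists_polar (Xᴴ * Y)
  have e0 : matAbs (Xᴴ * Y) = (X * V)ᴴ * Y := by
    calc matAbs (Xᴴ * Y) = (Vᴴ * V) * matAbs (Xᴴ * Y) := by rw [hVl, Matrix.one_mul]
      _ = Vᴴ * (Xᴴ * Y) := by rw [Matrix.mul_assoc, ← hXp]
      _ = (X * V)ᴴ * Y := by rw [conjTranspose_mul, Matrix.mul_assoc]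
  have hCS := trace_CS (X * V) Y
  have h3 : ((X * V)ᴴ * (X * V)).trace = (Xᴴ * X).trace := by
    calc ((X * V)ᴴ * (X * V)).trace = (Vᴴ * (Xᴴ * X) * V).trace := by
          simp only [conjTranspose_mul, Matrix.mul_assoc]
      _ = (V * Vᴴ * (Xᴴ * X)).trace := by rw [trace_mul_cycle]
      _ = (Xᴴ * X).trace := by rw [hVr, Matrix.one_mul]
  rw [h3] at hCS
  calc traceNorm (Xᴴ * Y) = (((X * V)ᴴ * Y).trace).re := by rw [traceNorm, e0]
    _ ≤ ‖(((X * V)ᴴ * Y)).trace‖ := Complex.re_le_norm _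
    _ ≤ _ := hCS

lemma traceNorm_triangle (X Y : Matrix (Fin m) (Fin m) ℂ) :
    traceNorm (X + Y) ≤ traceNorm X + traceNorm Y := by
  obtain ⟨V, hVl, hVr, hXp⟩ := exists_polar (X + Y)
  have e0 : traceNorm (X + Y) = ((Vᴴ * (X + Y)).trace).re := by
    rw [traceNorm]
    congr 2
    calc matAbs (X + Y) = (Vᴴ * V) * matAbs (X + Y) := by rw [hVl, Matrix.one_mul]
      _ = Vᴴ * (X + Y) := by rw [Matrix.mul_assoc, ← hXp]
  have hVh : (Vᴴ)ᴴ * Vᴴ = 1 := by rw [conjTranspose_conjTranspose, hVr]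
  rw [e0, Matrix.mul_add, trace_add, Complex.add_re]
  exact add_le_add (re_trace_mul_le_traceNorm X hVh) (re_trace_mul_le_traceNorm Y hVh)

lemma traceNorm_double (X : Matrix (Fin m) (Fin m) ℂ) :
    traceNorm (X + X) = 2 * traceNorm X := by
  have habs : matAbs (X + X) = matAbs X + matAbs X := by
    refine matAbs_eq_of_sq ((matAbs_posSemidef X).add (matAbs_posSemidef X)) ?_
    simp only [Matrix.add_mul, Matrix.mul_add, conjTranspose_add, matAbs_mul_self]
  rw [traceNorm, habs, trace_add, Complex.add_re, traceNorm]
  ring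

lemma fid_eq {A B : Matrix (Fin m) (Fin m) ℂ} (hA : A.PosSemidef) (hB : B.PosSemidef) :
    fid A B = traceNorm (hA.sqrt * hB.sqrt) := by
  rw [fid, psdSqrt, psdSqrt, dif_pos hA, dif_pos hB]
  rfl

lemma fid_nonneg {A B : Matrix (Fin m) (Fin m) ℂ} : 0 ≤ fid A B :=
  traceNorm_nonneg _

lemma one_unitary : ((1 : Matrix (Fin m) (Fin m) ℂ))ᴴ * 1 = 1 := by
  rw [conjTranspose_one, Matrix.one_mul]

lemma re_trace_le_traceNorm (X : Matrix (Fin m) (Fin m) ℂ) :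
    (X.trace).re ≤ traceNorm X := by
  have := re_trace_mul_le_traceNorm (V := 1) X one_unitary
  rwa [Matrix.one_mul] at this

lemma fvdg_lower {A B : Matrix (Fin m) (Fin m) ℂ} (hA : A.PosSemidef) (hB : B.PosSemidef) :
    (1/2) * (((A + B).trace).re) - (1/2) * traceNorm (A - B) ≤ fid A B := by
  classical
  set S := hA.sqrt with hSdef
  set T := hB.sqrt with hTdef
  have hSh : Sᴴ = S := hA.posSemidef_sqrt.1
  have hTh : Tᴴ = T := hB.posSemidef_sqrt.1
  have hSS : S * S = A := hA.sqrt_mul_self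
  have hTT : T * T = B := hB.sqrt_mul_self
  set P : Matrix (Fin m) (Fin m) ℂ := S - T with hPdef
  set Q : Matrix (Fin m) (Fin m) ℂ := S + T with hQdef
  have hPh : P.IsHermitian := by
    show Pᴴ = P
    rw [hPdef, conjTranspose_sub, hSh, hTh]
  set U : Matrix (Fin m) (Fin m) ℂ := eU hPh with hUdef
  set lam : Fin m → ℝ := hPh.eigenvalues with hlamdef
  have hUl : Uᴴ * U = 1 := star_mul_eU hPh
  have hUr : U * Uᴴ = 1 := eU_mul_star hPh
  have hPU : P = UC U lam := herm_eq_UC hPh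
  set fsgn : Fin m → ℝ := fun i => if lam i < 0 then (-1:ℝ) else 1 with hfsgn
  set fabs : Fin m → ℝ := fun i => |lam i| with hfabs
  set fpos : Fin m → ℝ := fun i => max (lam i) 0 with hfpos
  set fneg : Fin m → ℝ := fun i => max (-lam i) 0 with hfneg
  set E : Matrix (Fin m) (Fin m) ℂ := UC U fsgn with hEdef
  set Pabs : Matrix (Fin m) (Fin m) ℂ := UC U fabs with hPabsdef
  set Ppos : Matrix (Fin m) (Fin m) ℂ := UC U fpos with hPposdef
  set Pneg : Matrix (Fin m) (Fin m) ℂ := UC U fneg with hPnegdef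
  have hEunit : Eᴴ * E = 1 := by
    rw [hEdef, UC_conjTranspose, UC_mul hUl]
    have hfn : (fun i => fsgn i * fsgn i) = fun _ => (1:ℝ) := by
      funext i
      by_cases hi : lam i < 0 <;> simp [hfsgn, hi]
    rw [hfn, UC_one hUr]
  have hfnsl : (fun i => fsgn i * lam i) = fabs := by
    funext i
    by_cases hi : lam i < 0
    · simp [hfsgn, hfabs, hi, abs_of_neg hi]
    · simp [hfsgn, hfabs, hi, abs_of_nonneg (not_lt.mp hi)]
  have hfnls : (fun i => lam i * fsgn i) = fabs := by
    funext i
    by_cases hi : lam i < 0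
    · simp [hfsgn, hfabs, hi, abs_of_neg hi]
    · simp [hfsgn, hfabs, hi, abs_of_nonneg (not_lt.mp hi)]
  have hEP : E * P = Pabs := by
    rw [hEdef, hPU, UC_mul hUl, hfnsl, hPabsdef]
  have hPE : P * E = Pabs := by
    rw [hEdef, hPU, UC_mul hUl, hfnls, hPabsdef]
  have hAB2 : P * Q + Q * P = (A - B) + (A - B) := by
    have hh : P * Q + Q * P = S * S - T * T + (S * S - T * T) := by
      rw [hPdef, hQdef]; noncomm_ring
    rw [hh, hSS, hTT]
  have t1 : (E * (P * Q)).trace = (Pabs * Q).trace := by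
    rw [← Matrix.mul_assoc, hEP]
  have t2 : (E * (Q * P)).trace = (Pabs * Q).trace := by
    rw [← Matrix.mul_assoc, trace_mul_comm, ← Matrix.mul_assoc, hPE]
  have t3 : (E * (A - B)).trace + (E * (A - B)).trace = (Pabs * Q).trace + (Pabs * Q).trace := by
    calc (E * (A - B)).trace + (E * (A - B)).trace
        = (E * ((A - B) + (A - B))).trace := by rw [Matrix.mul_add, trace_add]
      _ = (E * (P * Q + Q * P)).trace := by rw [hAB2]
      _ = (E * (P * Q)).trace + (E * (Q * P)).trace := by rw [Matrix.mul_add, trace_add]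
      _ = _ := by rw [t1, t2]
  have hb1 : ((E * (A - B)).trace).re ≤ traceNorm (A - B) :=
    re_trace_mul_le_traceNorm (A - B) hEunit
  -- split inequality
  have hfnpn : (fun i => fpos i + fneg i) = fabs := by
    funext i
    rcases le_or_gt 0 (lam i) with hi | hi
    · simp [hfpos, hfneg, hfabs, max_eq_left hi, abs_of_nonneg hi,
        max_eq_right (neg_nonpos.mpr hi)]
    · simp [hfpos, hfneg, hfabs, max_eq_right hi.le, abs_of_neg hi,
        max_eq_left (neg_nonneg.mpr hi.le)]
  have hfnpm : (fun i => fpos i - fneg i) = lam := by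
    funext i
    rcases le_or_gt 0 (lam i) with hi | hi
    · simp [hfpos, hfneg, max_eq_left hi, max_eq_right (neg_nonpos.mpr hi)]
    · simp [hfpos, hfneg, max_eq_right hi.le, max_eq_left (neg_nonneg.mpr hi.le)]
  have h6 : Ppos + Pneg = Pabs := by
    rw [hPposdef, hPnegdef, UC_add, hfnpn, hPabsdef]
  have h7 : Ppos - Pneg = P := by
    rw [hPposdef, hPnegdef, UC_sub, hfnpm, hPU]
  have hsplit : Pabs * Q = P * P + (Ppos * (Q - P) + Pneg * (Q + P)) := by
    have hh : Ppos * (Q - P) + Pneg * (Q + P)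
        = (Ppos + Pneg) * Q - (Ppos - Pneg) * P := by noncomm_ring
    rw [h6, h7] at hh
    rw [hh]
    abel
  have hQmP : Q - P = T + T := by rw [hQdef, hPdef]; noncomm_ring
  have hQpP : Q + P = S + S := by rw [hQdef, hPdef]; noncomm_ring
  have hb2 : 0 ≤ ((Ppos * (Q - P)).trace).re := by
    rw [hQmP]
    exact psd_mul_trace_re_nonneg
      (UC_posSemidef U fun i => le_max_right _ _)
      (hB.posSemidef_sqrt.add hB.posSemidef_sqrt)
  have hb3 : 0 ≤ ((Pneg * (Q + P)).trace).re := by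
    rw [hQpP]
    exact psd_mul_trace_re_nonneg
      (UC_posSemidef U fun i => le_max_right _ _)
      (hA.posSemidef_sqrt.add hA.posSemidef_sqrt)
  have hb4 : ((P * P).trace).re ≤ ((Pabs * Q).trace).re := by
    rw [hsplit, trace_add, trace_add, Complex.add_re, Complex.add_re]
    linarith
  have hPP : P * P = A + B - (S * T + T * S) := by
    have hh : P * P = S * S + T * T - (S * T + T * S) := by rw [hPdef]; noncomm_ring
    rw [hh, hSS, hTT]
  have hTS : (T * S).trace = (S * T).trace := trace_mul_comm _ _
  have hPPre : ((P * P).trace).re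
      = (A.trace).re + (B.trace).re - 2 * ((S * T).trace).re := by
    rw [hPP, trace_sub, trace_add, trace_add, hTS, Complex.sub_re, Complex.add_re,
      Complex.add_re]
    ring
  have hb5 : ((S * T).trace).re ≤ fid A B := by
    rw [fid_eq hA hB]
    exact re_trace_le_traceNorm _
  have hre : ((A + B).trace).re = (A.trace).re + (B.trace).re := by
    rw [trace_add, Complex.add_re]
  have ht3re : ((E * (A - B)).trace).re + ((E * (A - B)).trace).re
      = ((Pabs * Q).trace).re + ((Pabs * Q).trace).re := by
    have := congrArg Complex.re t3
    simpa [Complex.add_re] using this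
  rw [hre]
  linarith

lemma fvdg_upper {A B : Matrix (Fin m) (Fin m) ℂ} (hA : A.PosSemidef) (hB : B.PosSemidef) :
    fid A B ≤ Real.sqrt ((1/4) * (((A + B).trace).re) ^ 2
      - (1/4) * traceNorm (A - B) ^ 2) := by
  classical
  set S := hA.sqrt with hSdef
  set T := hB.sqrt with hTdef
  have hSh : Sᴴ = S := hA.posSemidef_sqrt.1
  have hTh : Tᴴ = T := hB.posSemidef_sqrt.1
  have hSS : S * S = A := hA.sqrt_mul_self
  have hTT : T * T = B := hB.sqrt_mul_self
  obtain ⟨V, hVl, hVr, hXp⟩ := exists_polar (T * S)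
  set M : Matrix (Fin m) (Fin m) ℂ := matAbs (T * S) with hMdef
  have hMpsd : M.PosSemidef := matAbs_posSemidef _
  set R : Matrix (Fin m) (Fin m) ℂ := Vᴴ * T with hRdef
  have hRR : Rᴴ * R = B := by
    rw [hRdef]
    calc (Vᴴ * T)ᴴ * (Vᴴ * T) = Tᴴ * ((V * Vᴴ) * T) := by
          simp only [conjTranspose_mul, conjTranspose_conjTranspose, Matrix.mul_assoc]
      _ = B := by rw [hVr, Matrix.one_mul, hTh, hTT]
  have hSR : (S * R).trace = M.trace := by
    calc (S * R).trace = (S * Vᴴ * T).trace := by rw [hRdef, Matrix.mul_assoc]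
      _ = (T * (S * Vᴴ)).trace := trace_mul_comm _ _
      _ = (T * S * Vᴴ).trace := by rw [Matrix.mul_assoc]
      _ = (V * M * Vᴴ).trace := by rw [hXp]
      _ = (Vᴴ * V * M).trace := by rw [trace_mul_cycle]
      _ = M.trace := by rw [hVl, Matrix.one_mul]
  have hfidM : (M.trace).re = fid A B := by
    have h1 : traceNorm (T * S) = fid A B := by
      have h2 : (T * S)ᴴ = S * T := by rw [conjTranspose_mul, hSh, hTh]
      rw [fid_eq hA hB, ← hSdef, ← hTdef, ← h2, traceNorm_conjTranspose]
    rw [← h1, traceNorm, ← hMdef]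
  set F : ℝ := fid A B with hFdef
  have hFnn : 0 ≤ F := fid_nonneg
  set P : Matrix (Fin m) (Fin m) ℂ := S - R with hPdef
  set Q : Matrix (Fin m) (Fin m) ℂ := S + R with hQdef
  have hSRre : ((S * R).trace).re = F := by rw [hSR, hfidM]
  have hRS : (Rᴴ * S).trace = star ((S * R).trace) := by
    have h1 : (S * R)ᴴ = Rᴴ * S := by rw [conjTranspose_mul, hSh]
    rw [← h1, trace_conjTranspose]
  have hRSre : ((Rᴴ * S).trace).re = F := by
    rw [hRS, Complex.star_def, Complex.conj_re, hSRre]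
  set t : ℝ := ((A + B).trace).re with htdef
  have htre : t = (A.trace).re + (B.trace).re := by
    rw [htdef, trace_add, Complex.add_re]
  have hPP : Pᴴ * P = A + B - (S * R + Rᴴ * S) := by
    have hh : Pᴴ * P = Sᴴ * S + Rᴴ * R - (Sᴴ * R + Rᴴ * S) := by
      rw [hPdef, conjTranspose_sub]; noncomm_ring
    rw [hh, hSh, hSS, hRR]
  have hQQ : Qᴴ * Q = A + B + (S * R + Rᴴ * S) := by
    have hh : Qᴴ * Q = Sᴴ * S + Rᴴ * R + (Sᴴ * R + Rᴴ * S) := by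
      rw [hQdef, conjTranspose_add]; noncomm_ring
    rw [hh, hSh, hSS, hRR]
  have hPPre : ((Pᴴ * P).trace).re = t - 2 * F := by
    rw [hPP, trace_sub, trace_add, trace_add, Complex.sub_re, Complex.add_re, Complex.add_re,
      hSRre, hRSre, htre]
    ring
  have hQQre : ((Qᴴ * Q).trace).re = t + 2 * F := by
    rw [hQQ, trace_add, trace_add, trace_add, Complex.add_re, Complex.add_re, Complex.add_re,
      hSRre, hRSre, htre]
    ring
  have ha3 : 0 ≤ t - 2 * F := by
    rw [← hPPre]; exact psd_trace_re_nonneg (posSemidef_conjTranspose_mul_self P)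
  have ha4 : 0 ≤ t + 2 * F := by
    rw [← hQQre]; exact psd_trace_re_nonneg (posSemidef_conjTranspose_mul_self Q)
  have h2ab : (A - B) + (A - B) = Pᴴ * Q + Qᴴ * P := by
    have hh : Pᴴ * Q + Qᴴ * P = (Sᴴ * S - Rᴴ * R) + (Sᴴ * S - Rᴴ * R) := by
      rw [hPdef, hQdef, conjTranspose_sub, conjTranspose_add]; noncomm_ring
    rw [hh, hSh, hSS, hRR]
  have hbd1 : traceNorm (Pᴴ * Q)
      ≤ Real.sqrt (t - 2 * F) * Real.sqrt (t + 2 * F) := by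
    have := traceNorm_mul_le P Q
    rwa [hPPre, hQQre] at this
  have hbd2 : traceNorm (Qᴴ * P)
      ≤ Real.sqrt (t + 2 * F) * Real.sqrt (t - 2 * F) := by
    have := traceNorm_mul_le Q P
    rwa [hQQre, hPPre] at this
  have hdbl : 2 * traceNorm (A - B) ≤ 2 * (Real.sqrt (t - 2 * F) * Real.sqrt (t + 2 * F)) := by
    calc 2 * traceNorm (A - B) = traceNorm ((A - B) + (A - B)) := (traceNorm_double _).symm
      _ = traceNorm (Pᴴ * Q + Qᴴ * P) := by rw [h2ab]
      _ ≤ traceNorm (Pᴴ * Q) + traceNorm (Qᴴ * P) := traceNorm_triangle _ _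
      _ ≤ Real.sqrt (t - 2 * F) * Real.sqrt (t + 2 * F)
          + Real.sqrt (t + 2 * F) * Real.sqrt (t - 2 * F) := add_le_add hbd1 hbd2
      _ = 2 * (Real.sqrt (t - 2 * F) * Real.sqrt (t + 2 * F)) := by ring
  have htn : traceNorm (A - B) ≤ Real.sqrt ((t - 2 * F) * (t + 2 * F)) := by
    rw [Real.sqrt_mul ha3]
    linarith
  have htn2 : traceNorm (A - B) ^ 2 ≤ (t - 2 * F) * (t + 2 * F) := by
    calc traceNorm (A - B) ^ 2 ≤ Real.sqrt ((t - 2 * F) * (t + 2 * F)) ^ 2 :=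
          pow_le_pow_left₀ (traceNorm_nonneg _) htn 2
      _ = (t - 2 * F) * (t + 2 * F) := Real.sq_sqrt (mul_nonneg ha3 ha4)
  have hF2 : F ^ 2 ≤ (1/4) * t ^ 2 - (1/4) * traceNorm (A - B) ^ 2 := by nlinarith [htn2]
  calc F = Real.sqrt (F ^ 2) := (Real.sqrt_sq hFnn).symm
    _ ≤ _ := Real.sqrt_le_sqrt hF2

end FvdG

theorem fuchs_van_de_graaf {d : ℕ} (A B : Matrix (Fin d) (Fin d) ℂ)
    (hA : A.PosSemidef) (hB : B.PosSemidef) :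
    (1/2) * (((A + B).trace).re) - (1/2) * traceNorm (A - B) ≤ fid A B ∧
    fid A B ≤ Real.sqrt ((1/4) * (((A + B).trace).re) ^ 2 - (1/4) * traceNorm (A - B) ^ 2) :=
  ⟨FvdG.fvdg_lower hA hB, FvdG.fvdg_upper hA hB⟩
end

section
/- For positive semidefinite operators $A, B$ on a finite-dimensional Hilbert space, $\min\{\operatorname{Tr} A(I-E) + \operatorname{Tr} B E : 0 \le E \le I\} = \frac{1}{2}\operatorname{Tr}(A+B) - \frac{1}{2}\|A-B\|_1$, and the minimum is attained at $E = $ the projection onto the support of $(A-B)_+$. -/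
open Matrix
open scoped ComplexOrder

open scoped MatrixOrder in
lemma matAbs_eq_sqrt {m : ℕ} (A : Matrix (Fin m) (Fin m) ℂ) :
    matAbs A = CFC.sqrt (Aᴴ * A) := by
  have hP := Matrix.posSemidef_conjTranspose_mul_self A
  rw [CFC.sqrt_eq_cfc, cfc_nnreal_eq_real _ (Aᴴ * A), hP.1.cfc_eq]
  simp only [matAbs, IsHermitian.cfc, Unitary.conjStarAlgAut_apply]
  congr 3
  funext i
  simp [hP.eigenvalues_nonneg i]

open scoped MatrixOrder in
lemma matAbs_eq_of_mul_self {m : ℕ} {A S : Matrix (Fin m) (Fin m) ℂ} (hS : S.PosSemidef)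
    (h : S * S = Aᴴ * A) : matAbs A = S := by
  rw [matAbs_eq_sqrt]
  exact CFC.sqrt_unique h hS.nonneg

lemma trace_re_nonneg {d : ℕ} {X : Matrix (Fin d) (Fin d) ℂ} (hX : X.PosSemidef) :
    0 ≤ (X.trace).re := by
  have hdiag : ∀ i, 0 ≤ (X i i).re := by
    intro i
    exact (Complex.le_def.mp hX.diag_nonneg).1
  rw [Matrix.trace]
  rw [Complex.re_sum]
  exact Finset.sum_nonneg fun i _ => hdiag i

open scoped MatrixOrder in
lemma trace_mul_re_nonneg {d : ℕ} {X Y : Matrix (Fin d) (Fin d) ℂ}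
    (hX : X.PosSemidef) (hY : Y.PosSemidef) : 0 ≤ ((X * Y).trace).re := by
  have hC := (CFC.sqrt_nonneg X).posSemidef
  have h1 : X * Y = CFC.sqrt X * (CFC.sqrt X * Y) := by rw [← mul_assoc, CFC.sqrt_mul_sqrt_self X hX.nonneg]
  have h2 : ((CFC.sqrt X * (CFC.sqrt X * Y)).trace) = ((CFC.sqrt X * Y * CFC.sqrt X).trace) :=
    Matrix.trace_mul_comm _ _
  have h3 : (CFC.sqrt X * Y * CFC.sqrt X).PosSemidef := by
    have := hY.mul_mul_conjTranspose_same (CFC.sqrt X)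
    rwa [hC.1.eq] at this
  rw [h1, h2]
  exact trace_re_nonneg h3

lemma eq_of_forall_mulVec {d : ℕ} {M N : Matrix (Fin d) (Fin d) ℂ}
    (h : ∀ v, M *ᵥ v = N *ᵥ v) : M = N := by
  ext i j
  have := congrFun (h (Pi.single j 1)) i
  simpa [Matrix.mulVec_single] using this

theorem holevo_helstrom {d : ℕ} (A B : Matrix (Fin d) (Fin d) ℂ)
    (hA : A.PosSemidef) (hB : B.PosSemidef) :
    (∀ E : Matrix (Fin d) (Fin d) ℂ, E.PosSemidef → (1 - E).PosSemidef →
      (1/2) * (((A + B).trace).re) - (1/2) * traceNorm (A - B) ≤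
        ((A * (1 - E)).trace).re + ((B * E).trace).re) ∧
    (∀ E₀ : Matrix (Fin d) (Fin d) ℂ, E₀.IsHermitian → E₀ * E₀ = E₀ →
      LinearMap.range E₀.mulVecLin = LinearMap.range (matPosPart (A - B)).mulVecLin →
      ((A * (1 - E₀)).trace).re + ((B * E₀).trace).re =
        (1/2) * (((A + B).trace).re) - (1/2) * traceNorm (A - B)) := by
  set Δ : Matrix (Fin d) (Fin d) ℂ := A - B with hΔdef
  have hΔ : Δ.IsHermitian := hA.1.sub hB.1
  set Um : Matrix (Fin d) (Fin d) ℂ := (hΔ.eigenvectorUnitary : Matrix (Fin d) (Fin d) ℂ) with hUmdef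
  have hU1 : star Um * Um = 1 := by
    exact Matrix.mem_unitaryGroup_iff'.mp hΔ.eigenvectorUnitary.2
  set e : Fin d → ℝ := hΔ.eigenvalues with hedef
  set C : (Fin d → ℝ) → Matrix (Fin d) (Fin d) ℂ :=
    fun f => Um * Matrix.diagonal (Complex.ofReal ∘ f) * star Um with hCdef
  have hCpsd : ∀ f : Fin d → ℝ, (∀ i, 0 ≤ f i) → (C f).PosSemidef := by
    intro f hf
    have hd : (Matrix.diagonal (Complex.ofReal ∘ f)).PosSemidef :=
      Matrix.posSemidef_diagonal_iff.mpr fun i => by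
        simpa using Complex.zero_le_real.mpr (hf i)
    simpa [hCdef, Matrix.star_eq_conjTranspose] using hd.mul_mul_conjTranspose_same Um
  have hdiag : ∀ f g : Fin d → ℝ,
      (fun i => (Complex.ofReal ∘ f) i * (Complex.ofReal ∘ g) i) =
        (Complex.ofReal ∘ fun i => f i * g i) := by
    intro f g; funext i; simp
  have hCmul : ∀ f g : Fin d → ℝ, C f * C g = C (fun i => f i * g i) := by
    intro f g
    simp only [hCdef, mul_assoc]
    rw [← mul_assoc (star Um) Um, hU1, one_mul,
      ← mul_assoc (Matrix.diagonal (Complex.ofReal ∘ f)), Matrix.diagonal_mul_diagonal,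
      hdiag]
  have hCadd : ∀ f g : Fin d → ℝ, C f + C g = C (fun i => f i + g i) := by
    intro f g
    simp only [hCdef]
    rw [← Matrix.add_mul, ← Matrix.mul_add, Matrix.diagonal_add,
      show (fun i => (Complex.ofReal ∘ f) i + (Complex.ofReal ∘ g) i) = (Complex.ofReal ∘ fun i => f i + g i) from
        funext fun i => by simp]
  have hCsub : ∀ f g : Fin d → ℝ, C f - C g = C (fun i => f i - g i) := by
    intro f g
    simp only [hCdef]
    rw [← Matrix.sub_mul, ← Matrix.mul_sub, Matrix.diagonal_sub,
      show (fun i => (Complex.ofReal ∘ f) i - (Complex.ofReal ∘ g) i) = (Complex.ofReal ∘ fun i => f i - g i) from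
        funext fun i => by simp]
  have hΔeq : Δ = C e := hΔ.spectral_theorem
  have hSeq : matAbs Δ = C (fun i => |e i|) := by
    refine matAbs_eq_of_mul_self (hCpsd _ fun i => abs_nonneg _) ?_
    rw [hCmul, hΔ.eq, hΔeq, hCmul,
      show (fun i => |e i| * |e i|) = fun i => e i * e i from
        funext fun i => abs_mul_abs_self _]
  have hCsmul : ∀ (r : ℝ) (f : Fin d → ℝ), (r : ℂ) • C f = C (fun i => r * f i) := by
    intro r f
    simp only [hCdef]
    rw [show (Complex.ofReal ∘ fun i => r * f i) = (r : ℂ) • (Complex.ofReal ∘ f) from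
      funext fun i => by simp, Matrix.diagonal_smul, Matrix.mul_smul, Matrix.smul_mul]
  have hPeq : matPosPart Δ = C (fun i => max (e i) 0) := by
    rw [matPosPart, hSeq]
    nth_rewrite 1 [hΔeq]
    rw [hCadd, show (2⁻¹ : ℂ) = ((2⁻¹ : ℝ) : ℂ) by norm_num, hCsmul,
      show (fun i => (2⁻¹ : ℝ) * (|e i| + e i)) = fun i => max (e i) 0 from funext fun i => ?_]
    rcases le_total (e i) 0 with h | h
    · rw [abs_of_nonpos h, max_eq_right h]; ring
    · rw [abs_of_nonneg h, max_eq_left h]; ring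
  have hNeq : matNegPart Δ = C (fun i => max (-e i) 0) := by
    rw [matNegPart, hSeq]
    nth_rewrite 1 [hΔeq]
    rw [hCsub, show (2⁻¹ : ℂ) = ((2⁻¹ : ℝ) : ℂ) by norm_num, hCsmul,
      show (fun i => (2⁻¹ : ℝ) * (|e i| - e i)) = fun i => max (-e i) 0 from funext fun i => ?_]
    rcases le_total (e i) 0 with h | h
    · rw [abs_of_nonpos h, max_eq_left (by linarith)]; ring
    · rw [abs_of_nonneg h, max_eq_right (by linarith)]; ring
  have hCzero : C (fun _ => (0 : ℝ)) = 0 := by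
    simp only [hCdef]
    rw [show (Complex.ofReal ∘ fun _ : Fin d => (0 : ℝ)) = fun _ => (0 : ℂ) from
      funext fun i => by simp]
    simp
  have hNPzero : matNegPart Δ * matPosPart Δ = 0 := by
    rw [hNeq, hPeq, hCmul, show (fun i => max (-e i) 0 * max (e i) 0) = fun _ => (0 : ℝ) from
      funext fun i => ?_, hCzero]
    rcases le_total (e i) 0 with h | h
    · rw [max_eq_right h, mul_zero]
    · rw [max_eq_right (by linarith : -e i ≤ 0), zero_mul]
  have hPaddN : matPosPart Δ + matNegPart Δ = matAbs Δ := by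
    rw [hPeq, hNeq, hCadd, hSeq, show (fun i => max (e i) 0 + max (-e i) 0) = fun i => |e i| from
      funext fun i => ?_]
    rcases le_total (e i) 0 with h | h
    · rw [max_eq_right h, max_eq_left (by linarith), abs_of_nonpos h, zero_add]
    · rw [max_eq_left h, max_eq_right (by linarith), abs_of_nonneg h, add_zero]
  have hPsubN : matPosPart Δ - matNegPart Δ = Δ := by
    rw [hPeq, hNeq, hCsub, show (fun i => max (e i) 0 - max (-e i) 0) = e from
      funext fun i => ?_, ← hΔeq]
    rcases le_total (e i) 0 with h | h
    · rw [max_eq_right h, max_eq_left (by linarith)]; ring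
    · rw [max_eq_left h, max_eq_right (by linarith)]; ring
  have hPpsd : (matPosPart Δ).PosSemidef := hPeq ▸ hCpsd _ fun i => le_max_right _ _
  have hNpsd : (matNegPart Δ).PosSemidef := hNeq ▸ hCpsd _ fun i => le_max_right _ _
  -- trace identities
  have key1 : ((matPosPart Δ).trace).re - ((matNegPart Δ).trace).re
      = (A.trace).re - (B.trace).re := by
    have h := congrArg (fun M : Matrix (Fin d) (Fin d) ℂ => (M.trace).re) hPsubN
    simp only [hΔdef] at h
    simpa [Matrix.trace_sub, Complex.sub_re] using h
  have key2 : traceNorm Δ = ((matPosPart Δ).trace).re + ((matNegPart Δ).trace).re := by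
    have h := congrArg Complex.re (congrArg Matrix.trace hPaddN)
    rw [traceNorm, ← h]
    simp [Matrix.trace_add, Complex.add_re]
  have h6 : (((A + B).trace)).re = (A.trace).re + (B.trace).re := by
    simp [Matrix.trace_add, Complex.add_re]
  constructor
  · intro E hE hE1
    have h1 : 0 ≤ ((matNegPart Δ * E).trace).re := trace_mul_re_nonneg hNpsd hE
    have h2 : 0 ≤ ((matPosPart Δ * (1 - E)).trace).re := trace_mul_re_nonneg hPpsd hE1
    have h3 : ((matPosPart Δ * (1 - E)).trace).re
        = ((matPosPart Δ).trace).re - ((matPosPart Δ * E).trace).re := by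
      simp [Matrix.mul_sub, Matrix.trace_sub, Complex.sub_re, Matrix.mul_one]
    have h4 : ((matPosPart Δ * E).trace).re - ((matNegPart Δ * E).trace).re
        = ((A * E).trace).re - ((B * E).trace).re := by
      have hm : matPosPart Δ * E - matNegPart Δ * E = A * E - B * E := by
        rw [← Matrix.sub_mul, hPsubN, hΔdef, Matrix.sub_mul]
      have h := congrArg (fun M : Matrix (Fin d) (Fin d) ℂ => (M.trace).re) hm
      simpa [Matrix.trace_sub, Complex.sub_re] using h
    have h5 : ((A * (1 - E)).trace).re = (A.trace).re - ((A * E).trace).re := by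
      simp [Matrix.mul_sub, Matrix.trace_sub, Complex.sub_re, Matrix.mul_one]
    rw [h5, h6, key2]
    linarith
  · intro E₀ hherm hidem hrange
    have hNE : matNegPart Δ * E₀ = 0 := by
      apply eq_of_forall_mulVec
      intro v
      obtain ⟨w, hw⟩ : ∃ w, matPosPart Δ *ᵥ w = E₀ *ᵥ v := by
        have hm : E₀.mulVecLin v ∈ LinearMap.range (matPosPart Δ).mulVecLin := by
          rw [← hrange]; exact LinearMap.mem_range_self _ v
        obtain ⟨w, hw⟩ := hm
        exact ⟨w, by simpa [Matrix.mulVecLin_apply] using hw⟩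
      calc (matNegPart Δ * E₀) *ᵥ v = matNegPart Δ *ᵥ (E₀ *ᵥ v) := by
              rw [Matrix.mulVec_mulVec]
        _ = matNegPart Δ *ᵥ (matPosPart Δ *ᵥ w) := by rw [hw]
        _ = (matNegPart Δ * matPosPart Δ) *ᵥ w := by rw [Matrix.mulVec_mulVec]
        _ = (0 : Matrix (Fin d) (Fin d) ℂ) *ᵥ v := by rw [hNPzero]; simp
    have hEP : E₀ * matPosPart Δ = matPosPart Δ := by
      apply eq_of_forall_mulVec
      intro v
      obtain ⟨w, hw⟩ : ∃ w, E₀ *ᵥ w = matPosPart Δ *ᵥ v := by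
        have hm : (matPosPart Δ).mulVecLin v ∈ LinearMap.range E₀.mulVecLin := by
          rw [hrange]; exact LinearMap.mem_range_self _ v
        obtain ⟨w, hw⟩ := hm
        exact ⟨w, by simpa [Matrix.mulVecLin_apply] using hw⟩
      calc (E₀ * matPosPart Δ) *ᵥ v = E₀ *ᵥ (matPosPart Δ *ᵥ v) := by
              rw [Matrix.mulVec_mulVec]
        _ = E₀ *ᵥ (E₀ *ᵥ w) := by rw [hw]
        _ = (E₀ * E₀) *ᵥ w := by rw [Matrix.mulVec_mulVec]
        _ = E₀ *ᵥ w := by rw [hidem]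
        _ = matPosPart Δ *ᵥ v := hw
    have t1 : ((matNegPart Δ * E₀).trace).re = 0 := by rw [hNE]; simp
    have t2 : ((matPosPart Δ * E₀).trace).re = ((matPosPart Δ).trace).re := by
      rw [Matrix.trace_mul_comm, hEP]
    have h4 : ((matPosPart Δ * E₀).trace).re - ((matNegPart Δ * E₀).trace).re
        = ((A * E₀).trace).re - ((B * E₀).trace).re := by
      have hm : matPosPart Δ * E₀ - matNegPart Δ * E₀ = A * E₀ - B * E₀ := by
        rw [← Matrix.sub_mul, hPsubN, hΔdef, Matrix.sub_mul]
      have h := congrArg (fun M : Matrix (Fin d) (Fin d) ℂ => (M.trace).re) hm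
      simpa [Matrix.trace_sub, Complex.sub_re] using h
    have h5 : ((A * (1 - E₀)).trace).re = (A.trace).re - ((A * E₀).trace).re := by
      simp [Matrix.mul_sub, Matrix.trace_sub, Complex.sub_re, Matrix.mul_one]
    rw [h5, h6, key2]
    linarith
end
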